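/- arXiv:1702.05127 — 5 statements merged into one kernel-verified Lean document; each statement's English description precedes it below -/
import Mathlib

section
/- Let L ⊆ ℝ^m be a linear subspace and let σ be a nonzero sign vector in the oriented matroid O_L. Let u(σ) ∈ ℝ^m be the vector with u(σ)_i = 1 if σ_i = +, u(σ)_i = −1 if σ_i = −, and u(σ)_i = 0 if σ_i = 0. Then the l∞-distance from −u(σ) to L equals 1, the zero vector is an l∞-closest point of L to −u(σ), and type_L(−u(σ)) = σ. -/
/-- The set of points of `S` that are `l∞`-closest to `x` (the `Fin m → ℝ` metric is
the sup metric). -/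
noncomputable def closestPts {m : ℕ} (x : Fin m → ℝ) (S : Set (Fin m → ℝ)) :
    Set (Fin m → ℝ) :=
  {y ∈ S | dist x y = Metric.infDist x S}

open scoped Classical in
/-- The type of `x` with respect to a linear subspace `L`: the sign vector of the minimal
face of the cube of radius `d(x,L)` around `x` containing the set of closest points;
defined to be the zero sign vector when `x ∈ L`. -/
noncomputable def typeL {m : ℕ} (L : Submodule ℝ (Fin m → ℝ)) (x : Fin m → ℝ) :
    Fin m → SignType := fun i =>
  if x ∈ L then 0
  else if ∀ y ∈ closestPts x (L : Set (Fin m → ℝ)),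
      y i = x i + Metric.infDist x (L : Set (Fin m → ℝ)) then 1
  else if ∀ y ∈ closestPts x (L : Set (Fin m → ℝ)),
      y i = x i - Metric.infDist x (L : Set (Fin m → ℝ)) then -1
  else 0

/-- Membership in the oriented matroid associated to `L`: `σ` is the sign vector of some
linear functional vanishing on `L`. -/
def inOM {m : ℕ} (L : Submodule ℝ (Fin m → ℝ)) (σ : Fin m → SignType) : Prop :=
  ∃ c : Fin m → ℝ, (∀ y ∈ L, ∑ i, c i * y i = 0) ∧ ∀ i, SignType.sign (c i) = σ i


/-- `u(σ)`: the vector with entries `1, -1, 0` according to the sign vector `σ`. -/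
noncomputable def uVec {m : ℕ} (σ : Fin m → SignType) : Fin m → ℝ := fun i => (σ i : ℝ)

/-- for a nonzero sign vector `σ` in the oriented matroid of `L`,
`d(-u(σ), L) = 1`, the origin is an `l∞`-closest point of `L` to `-u(σ)`, and
`type_L(-u(σ)) = σ`. -/
theorem type_of_neg_uVec (m : ℕ) (L : Submodule ℝ (Fin m → ℝ)) (σ : Fin m → SignType)
    (hσ : σ ≠ 0) (hmem : inOM L σ) :
    Metric.infDist (-uVec σ) (L : Set (Fin m → ℝ)) = 1 ∧
    (0 : Fin m → ℝ) ∈ closestPts (-uVec σ) (L : Set (Fin m → ℝ)) ∧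
    typeL L (-uVec σ) = σ := by
  obtain ⟨c, hc, hsign⟩ := hmem
  set x : Fin m → ℝ := -uVec σ with hxdef
  have hxi : ∀ i, x i = -(σ i : ℝ) := fun i => rfl
  -- basic sign facts
  have hcs : ∀ i, c i * (σ i : ℝ) = |c i| := by
    intro i
    rcases lt_trichotomy (c i) 0 with h | h | h
    · rw [← hsign i, sign_eq_neg_one_iff.mpr h]
      simp [abs_of_neg h]
    · simp [h]
    · rw [← hsign i, sign_eq_one_iff.mpr h]
      simp [abs_of_pos h]
  -- S > 0
  set S : ℝ := ∑ i, |c i| with hSdef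
  have hSpos : 0 < S := by
    obtain ⟨i, hi⟩ : ∃ i, σ i ≠ 0 := by
      by_contra h
      push_neg at h
      exact hσ (funext fun i => h i)
    have hci : c i ≠ 0 := fun h => hi (by rw [← hsign i, h, sign_zero])
    exact Finset.sum_pos' (fun j _ => abs_nonneg _)
      ⟨i, Finset.mem_univ i, abs_pos.mpr hci⟩
  -- key sum identity
  have hsum : ∀ y ∈ L, ∑ i, c i * (y i - x i) = S := by
    intro y hy
    have : ∑ i, c i * (y i - x i) = (∑ i, c i * y i) + ∑ i, c i * (σ i : ℝ) := by
      rw [← Finset.sum_add_distrib]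
      congr 1; funext i; rw [hxi i]; ring
    rw [this, hc y hy, zero_add]
    exact Finset.sum_congr rfl fun i _ => hcs i
  -- coordinatewise bound
  have hcoord : ∀ (y : Fin m → ℝ) i, |y i - x i| ≤ dist x y := by
    intro y i
    calc |y i - x i| = dist (x i) (y i) := by rw [Real.dist_eq, abs_sub_comm]
    _ ≤ dist x y := dist_le_pi_dist x y i
  -- lower bound for distance to any point of L
  have hlb : ∀ y ∈ L, 1 ≤ dist x y := by
    intro y hy
    have h1 : S ≤ S * dist x y := by
      calc S = ∑ i, c i * (y i - x i) := (hsum y hy).symm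
      _ ≤ ∑ i, |c i| * dist x y := by
          apply Finset.sum_le_sum
          intro i _
          calc c i * (y i - x i) ≤ |c i * (y i - x i)| := le_abs_self _
          _ = |c i| * |y i - x i| := abs_mul _ _
          _ ≤ |c i| * dist x y := by
              exact mul_le_mul_of_nonneg_left (hcoord y i) (abs_nonneg _)
      _ = S * dist x y := by rw [← Finset.sum_mul]
    nlinarith
  -- dist x 0 = 1
  have hd0 : dist x (0 : Fin m → ℝ) = 1 := by
    refine le_antisymm ?_ (hlb 0 L.zero_mem)
    rw [dist_pi_le_iff (by norm_num : (0:ℝ) ≤ 1)]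
    intro i
    rw [Real.dist_eq, hxi i]
    simp only [Pi.zero_apply, sub_zero, abs_neg]
    rcases (σ i) with _ | _ | _ <;> norm_num
  -- infDist = 1
  have hinf : Metric.infDist x (L : Set (Fin m → ℝ)) = 1 := by
    refine le_antisymm (hd0 ▸ Metric.infDist_le_dist_of_mem L.zero_mem) ?_
    by_contra h
    push_neg at h
    obtain ⟨y, hy, hdy⟩ := (Metric.infDist_lt_iff ⟨0, L.zero_mem⟩).mp h
    exact absurd (hlb y hy) (not_le.mpr hdy)
  have h0cl : (0 : Fin m → ℝ) ∈ closestPts x (L : Set (Fin m → ℝ)) :=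
    ⟨L.zero_mem, by rw [hd0, hinf]⟩
  -- x ∉ L
  have hxL : x ∉ L := by
    intro h
    have := hlb x h
    rw [dist_self] at this
    linarith
  -- equality forcing for closest points
  have hforce : ∀ y ∈ closestPts x (L : Set (Fin m → ℝ)), ∀ i,
      c i * (y i - x i) = |c i| := by
    rintro y ⟨hyL, hyd⟩ i
    have hle : ∀ j ∈ Finset.univ, c j * (y j - x j) ≤ |c j| := by
      intro j _
      calc c j * (y j - x j) ≤ |c j * (y j - x j)| := le_abs_self _
      _ = |c j| * |y j - x j| := abs_mul _ _
      _ ≤ |c j| * 1 := by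
          refine mul_le_mul_of_nonneg_left ?_ (abs_nonneg _)
          have hd1 : dist x y = 1 := by rw [hyd, hinf]
          exact hd1 ▸ hcoord y j
      _ = |c j| := mul_one _
    have heq : (∑ j, c j * (y j - x j)) = ∑ j, |c j| := by
      rw [hsum y hyL]
    exact (Finset.sum_eq_sum_iff_of_le hle).mp heq i (Finset.mem_univ i)
  refine ⟨hinf, h0cl, ?_⟩
  funext i
  simp only [typeL, if_neg hxL, hinf]
  rcases hsi : (σ i) with _ | _ | _
  · -- σ i = 0
    have hx0 : x i = 0 := by rw [hxi i, hsi]; simp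
    have h1 : ¬ (∀ y ∈ closestPts x (L : Set (Fin m → ℝ)), y i = x i + Metric.infDist x (L : Set (Fin m → ℝ))) := by
      intro h
      have := h 0 h0cl
      rw [hinf] at this
      simp [hx0] at this
    have h2 : ¬ (∀ y ∈ closestPts x (L : Set (Fin m → ℝ)), y i = x i - Metric.infDist x (L : Set (Fin m → ℝ))) := by
      intro h
      have := h 0 h0cl
      rw [hinf] at this
      simp [hx0] at this
    rw [if_neg h1, if_neg h2]
    exact SignType.zero_eq_zero.symm
  · -- σ i = -1 : c i < 0
    have hci : c i < 0 := sign_eq_neg_one_iff.mp (by rw [hsign i, hsi]; exact SignType.neg_eq_neg_one)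
    have hxv : x i = 1 := by rw [hxi i, hsi]; simp
    have h1 : ¬ (∀ y ∈ closestPts x (L : Set (Fin m → ℝ)), y i = x i + Metric.infDist x (L : Set (Fin m → ℝ))) := by
      intro h
      have := h 0 h0cl
      rw [hinf] at this
      simp only [Pi.zero_apply, hxv] at this
      norm_num at this
    have h2 : ∀ y ∈ closestPts x (L : Set (Fin m → ℝ)), y i = x i - Metric.infDist x (L : Set (Fin m → ℝ)) := by
      intro y hy
      have hf := hforce y hy i
      rw [abs_of_neg hci] at hf
      rw [hinf]
      nlinarith
    rw [if_neg h1, if_pos h2]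
    exact SignType.neg_eq_neg_one.symm
  · -- σ i = 1 : c i > 0
    have hci : 0 < c i := sign_eq_one_iff.mp (by rw [hsign i, hsi]; exact SignType.pos_eq_one)
    have h1 : ∀ y ∈ closestPts x (L : Set (Fin m → ℝ)), y i = x i + Metric.infDist x (L : Set (Fin m → ℝ)) := by
      intro y hy
      have hf := hforce y hy i
      rw [abs_of_pos hci] at hf
      rw [hinf]
      nlinarith
    rw [if_pos h1]
    exact SignType.pos_eq_one.symm
end

section
/- Let L ⊆ ℝ^m be a linear subspace of dimension d and let x ∈ ℝ^m with x ∉ L. Then the set C(x,L) of l∞-closest points to x in L is a nonempty convex set whose affine hull has dimension d − rank(type_L(x)), where rank(σ) is the rank of σ with respect to L. -/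
/-- The rank of a sign vector `σ` with respect to `L`: the minimum cardinality of a subset
`S` of the support of `σ` such that every `y ∈ L` vanishing on `S` vanishes on the whole
support of `σ`. -/
noncomputable def rankSign {m : ℕ} (L : Submodule ℝ (Fin m → ℝ)) (σ : Fin m → SignType) : ℕ :=
  sInf {k : ℕ | ∃ S : Finset (Fin m), S.card = k ∧ (∀ i ∈ S, σ i ≠ 0) ∧
    ∀ y ∈ L, (∀ i ∈ S, y i = 0) → ∀ j, σ j ≠ 0 → y j = 0}

/- ------------------ Auxiliary development ------------------- -/

open Metric Module

lemma mem_closestPts_iff {m : ℕ} {S : Set (Fin m → ℝ)} {x y : Fin m → ℝ} :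
    y ∈ closestPts x S ↔ y ∈ S ∧ dist x y ≤ Metric.infDist x S :=
  ⟨fun h => ⟨h.1, h.2.le⟩, fun h => ⟨h.1, le_antisymm h.2 (Metric.infDist_le_dist_of_mem h.1)⟩⟩

lemma closest_nonempty {m : ℕ} (L : Submodule ℝ (Fin m → ℝ)) (x : Fin m → ℝ) :
    (closestPts x (L : Set (Fin m → ℝ))).Nonempty := by
  obtain ⟨y, hy, hdy⟩ :=
    (L.closed_of_finiteDimensional).exists_infDist_eq_dist ⟨0, L.zero_mem⟩ x
  exact ⟨y, hy, hdy.symm⟩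

lemma closest_convex {m : ℕ} (L : Submodule ℝ (Fin m → ℝ)) (x : Fin m → ℝ) :
    Convex ℝ (closestPts x (L : Set (Fin m → ℝ))) := by
  have h : closestPts x (L : Set (Fin m → ℝ)) =
      (L : Set (Fin m → ℝ)) ∩ Metric.closedBall x (Metric.infDist x (L : Set (Fin m → ℝ))) := by
    ext y
    rw [mem_closestPts_iff]
    simp [Metric.mem_closedBall, dist_comm]
  rw [h]
  refine Convex.inter ?_ (convex_closedBall x _)
  intro y hy z hz a b ha hb hab
  exact L.add_mem (L.smul_mem a hy) (L.smul_mem b hz)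

/-- The subspace of `L` vanishing on the support of `σ`. -/
noncomputable def Kpin {m : ℕ} (L : Submodule ℝ (Fin m → ℝ)) (σ : Fin m → SignType) :
    Submodule ℝ (Fin m → ℝ) :=
  L ⊓ ⨅ (i : Fin m) (_ : σ i ≠ 0), LinearMap.ker (LinearMap.proj (R := ℝ) (φ := fun _ : Fin m => ℝ) i)

lemma mem_Kpin {m : ℕ} (L : Submodule ℝ (Fin m → ℝ)) (σ : Fin m → SignType)
    (v : Fin m → ℝ) : v ∈ Kpin L σ ↔ v ∈ L ∧ ∀ i, σ i ≠ 0 → v i = 0 := by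
  simp [Kpin, Submodule.mem_inf, Submodule.mem_iInf, LinearMap.mem_ker]

lemma typeL_eq_zero {m : ℕ} (L : Submodule ℝ (Fin m → ℝ)) (x : Fin m → ℝ)
    (hx : x ∉ L) (i : Fin m) (h : typeL L x i = 0) :
    (∃ y ∈ closestPts x (L : Set (Fin m → ℝ)),
        y i ≠ x i + Metric.infDist x (L : Set (Fin m → ℝ))) ∧
    (∃ y ∈ closestPts x (L : Set (Fin m → ℝ)),
        y i ≠ x i - Metric.infDist x (L : Set (Fin m → ℝ))) := by
  classical
  unfold typeL at h
  rw [if_neg hx] at h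
  split_ifs at h with h1 h2
  all_goals first
    | (exact absurd h (by decide))
    | (push_neg at h1 h2; exact ⟨h1, h2⟩)

lemma typeL_ne_zero {m : ℕ} (L : Submodule ℝ (Fin m → ℝ)) (x : Fin m → ℝ)
    (hx : x ∉ L) (i : Fin m) (h : typeL L x i ≠ 0) :
    ∀ y ∈ closestPts x (L : Set (Fin m → ℝ)), ∀ z ∈ closestPts x (L : Set (Fin m → ℝ)),
      y i = z i := by
  classical
  unfold typeL at h
  rw [if_neg hx] at h
  split_ifs at h with h1 h2
  · intro y hy z hz; rw [h1 y hy, h1 z hz]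
  · intro y hy z hz; rw [h2 y hy, h2 z hz]
  · exact absurd rfl h

lemma coord_bound {m : ℕ} (L : Submodule ℝ (Fin m → ℝ)) (x : Fin m → ℝ)
    {y : Fin m → ℝ} (hy : y ∈ closestPts x (L : Set (Fin m → ℝ))) (i : Fin m) :
    x i - Metric.infDist x (L : Set (Fin m → ℝ)) ≤ y i ∧
    y i ≤ x i + Metric.infDist x (L : Set (Fin m → ℝ)) := by
  have h : dist (x i) (y i) ≤ Metric.infDist x (L : Set (Fin m → ℝ)) :=
    le_of_le_of_eq (dist_le_pi_dist x y i) hy.2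
  rw [Real.dist_eq, abs_le] at h
  constructor <;> linarith [h.1, h.2]

lemma exists_interior_point {m : ℕ} (L : Submodule ℝ (Fin m → ℝ)) (x : Fin m → ℝ)
    (hx : x ∉ L) :
    ∃ y ∈ closestPts x (L : Set (Fin m → ℝ)),
      ∀ i, typeL L x i = 0 →
        |y i - x i| < Metric.infDist x (L : Set (Fin m → ℝ)) := by
  classical
  set r := Metric.infDist x (L : Set (Fin m → ℝ)) with hrdef
  set C := closestPts x (L : Set (Fin m → ℝ)) with hCdef
  obtain ⟨y₀, hy₀⟩ := closest_nonempty L x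
  have hplus : ∀ i, ∃ y ∈ C, typeL L x i = 0 → y i < x i + r := by
    intro i
    by_cases h : typeL L x i = 0
    · obtain ⟨⟨y, hy, hyne⟩, -⟩ := typeL_eq_zero L x hx i h
      exact ⟨y, hy, fun _ => lt_of_le_of_ne (coord_bound L x hy i).2 hyne⟩
    · exact ⟨y₀, hy₀, fun hc => absurd hc h⟩
  have hminus : ∀ i, ∃ y ∈ C, typeL L x i = 0 → x i - r < y i := by
    intro i
    by_cases h : typeL L x i = 0
    · obtain ⟨-, ⟨y, hy, hyne⟩⟩ := typeL_eq_zero L x hx i h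
      exact ⟨y, hy, fun _ => lt_of_le_of_ne' (coord_bound L x hy i).1 hyne⟩
    · exact ⟨y₀, hy₀, fun hc => absurd hc h⟩
  choose a haC ha using hplus
  choose b hbC hb using hminus
  have hconv : Convex ℝ C := closest_convex L x
  set z : Option (Fin m ⊕ Fin m) → (Fin m → ℝ) := fun o => o.elim y₀ (Sum.elim a b) with hz
  have hzC : ∀ o, z o ∈ C := by
    rintro (_ | (i | i))
    · exact hy₀
    · exact haC i
    · exact hbC i
  set w : Option (Fin m ⊕ Fin m) → ℝ := fun _ => ((2 : ℝ) * m + 1)⁻¹ with hw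
  have hNpos : (0 : ℝ) < 2 * m + 1 := by positivity
  have hwpos : ∀ o, 0 < w o := fun o => by
    rw [hw]; exact inv_pos.2 hNpos
  have hwsum : ∑ o : Option (Fin m ⊕ Fin m), w o = 1 := by
    rw [Finset.sum_const, Finset.card_univ]
    simp only [Fintype.card_option, Fintype.card_sum, Fintype.card_fin, nsmul_eq_mul]
    push_cast
    rw [show (m : ℝ) + m + 1 = 2 * m + 1 by ring, mul_inv_cancel₀ (by positivity)]
  refine ⟨∑ o, w o • z o, hconv.sum_mem (fun o _ => (hwpos o).le) hwsum (fun o _ => hzC o), ?_⟩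
  intro i h
  have hsum_i : (∑ o, w o • z o) i = ∑ o, w o * z o i := by
    rw [Finset.sum_apply]
    simp
  rw [abs_sub_lt_iff, hsum_i]
  constructor
  · have hlt : ∑ o, w o * z o i < ∑ o : Option (Fin m ⊕ Fin m), w o * (x i + r) := by
      apply Finset.sum_lt_sum
      · intro o _
        exact mul_le_mul_of_nonneg_left (coord_bound L x (hzC o) i).2 (hwpos o).le
      · refine ⟨some (Sum.inl i), Finset.mem_univ _, ?_⟩
        exact mul_lt_mul_of_pos_left (ha i h) (hwpos (some (Sum.inl i)))
    have hrhs : ∑ o : Option (Fin m ⊕ Fin m), w o * (x i + r) = x i + r := by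
      rw [← Finset.sum_mul, hwsum, one_mul]
    linarith
  · have hlt : ∑ o : Option (Fin m ⊕ Fin m), w o * (x i - r) < ∑ o, w o * z o i := by
      apply Finset.sum_lt_sum
      · intro o _
        exact mul_le_mul_of_nonneg_left (coord_bound L x (hzC o) i).1 (hwpos o).le
      · refine ⟨some (Sum.inr i), Finset.mem_univ _, ?_⟩
        exact mul_lt_mul_of_pos_left (hb i h) (hwpos (some (Sum.inr i)))
    have hrhs : ∑ o : Option (Fin m ⊕ Fin m), w o * (x i - r) = x i - r := by
      rw [← Finset.sum_mul, hwsum, one_mul]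
    linarith

lemma direction_eq {m : ℕ} (L : Submodule ℝ (Fin m → ℝ)) (x : Fin m → ℝ) (hx : x ∉ L) :
    vectorSpan ℝ (closestPts x (L : Set (Fin m → ℝ))) = Kpin L (typeL L x) := by
  classical
  set r := Metric.infDist x (L : Set (Fin m → ℝ)) with hrdef
  have hrpos : 0 < r :=
    ((L.closed_of_finiteDimensional).notMem_iff_infDist_pos ⟨0, L.zero_mem⟩).1 hx
  apply le_antisymm
  · rw [vectorSpan_def, Submodule.span_le]
    rintro u hu
    obtain ⟨y, hy, z, hz, rfl⟩ := Set.mem_vsub.1 hu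
    rw [SetLike.mem_coe, mem_Kpin]
    constructor
    · exact L.sub_mem hy.1 hz.1
    · intro i hi
      have := typeL_ne_zero L x hx i hi y hy z hz
      simp [vsub_eq_sub, this]
  · intro v hv
    obtain ⟨hvL, hv0⟩ := (mem_Kpin L _ v).1 hv
    obtain ⟨y, hyC, hyint⟩ := exists_interior_point L x hx
    have hne : Nonempty (Fin m) := by
      by_contra h
      exact hx ((funext fun i : Fin m => ((h ⟨i⟩).elim : x i = 0)) ▸ L.zero_mem)
    set δ : Fin m → ℝ := fun i =>
      if typeL L x i = 0 then (r - |y i - x i|) / (|v i| + 1) else 1 with hδ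
    have hδpos : ∀ i, 0 < δ i := by
      intro i
      by_cases h : typeL L x i = 0
      · simp only [hδ, if_pos h]
        have := hyint i h
        apply div_pos (by linarith) (by positivity)
      · simp [hδ, h]
    have huniv : (Finset.univ : Finset (Fin m)).Nonempty := Finset.univ_nonempty
    set ε := Finset.univ.inf' huniv δ with hε
    have hεpos : 0 < ε := (Finset.lt_inf'_iff huniv).2 fun i _ => hδpos i
    have hεle : ∀ i, ε ≤ δ i := fun i => Finset.inf'_le δ (Finset.mem_univ i)
    have hyv : y + ε • v ∈ closestPts x (L : Set (Fin m → ℝ)) := by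
      rw [mem_closestPts_iff]
      refine ⟨L.add_mem hyC.1 (L.smul_mem _ hvL), ?_⟩
      rw [dist_pi_le_iff hrpos.le]
      intro i
      rw [Real.dist_eq]
      simp only [Pi.add_apply, Pi.smul_apply, smul_eq_mul]
      by_cases h : typeL L x i = 0
      · have h1 : |y i - x i| < r := hyint i h
        have h2 : ε * |v i| ≤ r - |y i - x i| := by
          calc ε * |v i| ≤ δ i * |v i| :=
                mul_le_mul_of_nonneg_right (hεle i) (abs_nonneg _)
            _ = (r - |y i - x i|) * (|v i| / (|v i| + 1)) := by
                rw [hδ]; simp only [if_pos h]; ring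
            _ ≤ (r - |y i - x i|) * 1 := by
                apply mul_le_mul_of_nonneg_left _ (by linarith)
                rw [div_le_one (by positivity)]
                linarith [abs_nonneg (v i)]
            _ = r - |y i - x i| := mul_one _
        have h3 : |x i - (y i + ε * v i)| ≤ |x i - y i| + ε * |v i| := by
          calc |x i - (y i + ε * v i)| = |(x i - y i) + (-(ε * v i))| := by ring_nf
            _ ≤ |x i - y i| + |(-(ε * v i))| := abs_add_le _ _
            _ = |x i - y i| + ε * |v i| := by
                rw [abs_neg, abs_mul, abs_of_pos hεpos]
        have habs : |x i - y i| = |y i - x i| := abs_sub_comm _ _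
        linarith
      · have hvi : v i = 0 := hv0 i h
        rw [hvi, mul_zero, add_zero, ← Real.dist_eq]
        exact le_of_le_of_eq (dist_le_pi_dist x y i) hyC.2
    have hmem : (y + ε • v) -ᵥ y ∈ vectorSpan ℝ (closestPts x (L : Set (Fin m → ℝ))) :=
      vsub_mem_vectorSpan ℝ hyv hyC
    have hmem2 : ε • v ∈ vectorSpan ℝ (closestPts x (L : Set (Fin m → ℝ))) := by
      simpa [vsub_eq_sub] using hmem
    have hmem3 := (vectorSpan ℝ (closestPts x (L : Set (Fin m → ℝ)))).smul_mem ε⁻¹ hmem2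
    rwa [inv_smul_smul₀ (ne_of_gt hεpos)] at hmem3

lemma rank_eq {m : ℕ} (L : Submodule ℝ (Fin m → ℝ)) (σ : Fin m → SignType) :
    rankSign L σ + Module.finrank ℝ (Kpin L σ) = Module.finrank ℝ L := by
  classical
  set f : Fin m → Module.Dual ℝ L :=
    fun i => (LinearMap.proj (R := ℝ) (φ := fun _ : Fin m => ℝ) i).comp L.subtype with hf
  set T : Set (Module.Dual ℝ L) := f '' {i | σ i ≠ 0} with hT
  set W : Submodule ℝ (Module.Dual ℝ L) := Submodule.span ℝ T with hW
  have hco : (W.dualCoannihilator).map L.subtype = Kpin L σ := by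
    ext v
    rw [Submodule.mem_map, mem_Kpin]
    constructor
    · rintro ⟨u, hu, rfl⟩
      rw [Submodule.mem_dualCoannihilator] at hu
      refine ⟨u.2, fun i hi => ?_⟩
      have := hu (f i) (Submodule.subset_span ⟨i, hi, rfl⟩)
      simpa [hf] using this
    · rintro ⟨hvL, hv⟩
      refine ⟨⟨v, hvL⟩, ?_, rfl⟩
      rw [Submodule.mem_dualCoannihilator]
      intro φ hφ
      have hle : W ≤ LinearMap.ker ((Module.Dual.eval ℝ L) ⟨v, hvL⟩) := by
        rw [hW, Submodule.span_le]
        rintro ψ ⟨i, hi, rfl⟩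
        simp [LinearMap.mem_ker, hf, hv i hi]
      simpa using hle hφ
  have hdim : Module.finrank ℝ W + Module.finrank ℝ (Kpin L σ) = Module.finrank ℝ L := by
    have h1 := Subspace.finrank_add_finrank_dualCoannihilator_eq W
    have h2 : Module.finrank ℝ (Kpin L σ) = Module.finrank ℝ W.dualCoannihilator := by
      rw [← hco, Submodule.finrank_map_subtype_eq]
    rw [h2]
    exact h1
  -- construct a minimal S
  obtain ⟨b, hbT, hbspan, hbind⟩ := exists_linearIndependent ℝ T
  haveI : Finite b := hbind.finite
  haveI : Fintype b := Fintype.ofFinite _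
  have hbcard : Module.finrank ℝ W = b.toFinset.card := by
    rw [hW, ← hbspan]
    rw [finrank_span_set_eq_card hbind]
  have hchoice : ∀ φ : b, ∃ i, σ i ≠ 0 ∧ f i = (φ : Module.Dual ℝ L) := by
    rintro ⟨φ, hφ⟩
    obtain ⟨i, hi, hfi⟩ := hbT hφ
    exact ⟨i, hi, hfi⟩
  choose g hg1 hg2 using hchoice
  have hginj : Function.Injective g := by
    intro φ ψ h
    exact Subtype.ext ((hg2 φ).symm.trans (by rw [h, hg2 ψ]))
  set S : Finset (Fin m) := Finset.univ.image g with hS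
  have hScard : S.card = Module.finrank ℝ W := by
    rw [hS, Finset.card_image_of_injective _ hginj, Finset.card_univ, hbcard,
      Set.toFinset_card]
  have hSmem : Module.finrank ℝ W ∈ {k : ℕ | ∃ S : Finset (Fin m), S.card = k ∧
      (∀ i ∈ S, σ i ≠ 0) ∧
      ∀ y ∈ L, (∀ i ∈ S, y i = 0) → ∀ j, σ j ≠ 0 → y j = 0} := by
    refine ⟨S, hScard, ?_, ?_⟩
    · intro i hi
      rw [hS, Finset.mem_image] at hi
      obtain ⟨φ, -, rfl⟩ := hi
      exact hg1 φ
    · intro y hy h0 j hj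
      have hyb : ∀ φ ∈ b, φ (⟨y, hy⟩ : L) = 0 := by
        intro φ hφ
        have h1 := h0 (g ⟨φ, hφ⟩) (by rw [hS]; exact Finset.mem_image_of_mem _ (Finset.mem_univ _))
        have h2 : f (g ⟨φ, hφ⟩) = φ := hg2 ⟨φ, hφ⟩
        rw [← h2]
        simpa [hf] using h1
      have hker : W ≤ LinearMap.ker ((Module.Dual.eval ℝ L) (⟨y, hy⟩ : L)) := by
        rw [hW, ← hbspan, Submodule.span_le]
        intro ψ hψ
        simp [LinearMap.mem_ker, hyb ψ hψ]
      have := hker (Submodule.subset_span ⟨j, hj, rfl⟩ : f j ∈ W)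
      simpa [hf] using this
  have hlb : ∀ k ∈ {k : ℕ | ∃ S : Finset (Fin m), S.card = k ∧
      (∀ i ∈ S, σ i ≠ 0) ∧
      ∀ y ∈ L, (∀ i ∈ S, y i = 0) → ∀ j, σ j ≠ 0 → y j = 0},
      Module.finrank ℝ W ≤ k := by
    rintro k ⟨S', rfl, hSsupp, hSprop⟩
    set ψ : L →ₗ[ℝ] ({ i // i ∈ S' } → ℝ) :=
      LinearMap.pi fun i : { i // i ∈ S' } =>
        (LinearMap.proj (R := ℝ) (φ := fun _ : Fin m => ℝ) (i : Fin m)).comp L.subtype with hψ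
    have hker : (LinearMap.ker ψ).map L.subtype = Kpin L σ := by
      ext v
      rw [Submodule.mem_map, mem_Kpin]
      constructor
      · rintro ⟨u, hu, rfl⟩
        rw [LinearMap.mem_ker] at hu
        refine ⟨u.2, fun j hj => hSprop u u.2 (fun i hi => ?_) j hj⟩
        have := congrFun hu ⟨i, hi⟩
        simpa [hψ] using this
      · rintro ⟨hvL, hv0⟩
        refine ⟨⟨v, hvL⟩, ?_, rfl⟩
        rw [LinearMap.mem_ker]
        funext i
        simp [hψ, hv0 i (hSsupp i i.2)]
    have h1 := LinearMap.finrank_range_add_finrank_ker ψ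
    have h2 : Module.finrank ℝ (LinearMap.range ψ) ≤ S'.card := by
      refine le_trans (Submodule.finrank_le _) ?_
      rw [Module.finrank_fintype_fun_eq_card]
      simp
    have h3 : Module.finrank ℝ (LinearMap.ker ψ) = Module.finrank ℝ (Kpin L σ) := by
      rw [← hker, Submodule.finrank_map_subtype_eq]
    omega
  have hrank : rankSign L σ = Module.finrank ℝ W := by
    unfold rankSign
    exact le_antisymm (Nat.sInf_le hSmem) (le_csInf ⟨_, hSmem⟩ hlb)
  omega

/-- for `x ∉ L`, the set of `l∞`-closest points of `L` to `x` is a nonempty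
convex set whose affine hull has dimension `d - rank(type_L(x))`, where `d = dim L`. -/
theorem dim_closestPts (m : ℕ) (L : Submodule ℝ (Fin m → ℝ)) (d : ℕ)
    (hd : Module.finrank ℝ L = d) (x : Fin m → ℝ) (hx : x ∉ L) :
    (closestPts x (L : Set (Fin m → ℝ))).Nonempty ∧
    Convex ℝ (closestPts x (L : Set (Fin m → ℝ))) ∧
    Module.finrank ℝ (affineSpan ℝ (closestPts x (L : Set (Fin m → ℝ)))).direction
      = d - rankSign L (typeL L x) := by
  refine ⟨closest_nonempty L x, closest_convex L x, ?_⟩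
  rw [direction_affineSpan, direction_eq L x hx]
  have h1 := rank_eq L (typeL L x)
  omega
end

section
/- Let L ⊆ ℝ^m be a linear subspace and let x ∈ ℝ^m with x ∉ L, and set σ = type_L(x). Then the affine hull of the set C(x,L) of l∞-closest points to x in L has the same dimension as the linear space L(σ) = {y ∈ L : y_i = 0 for all i with σ_i ≠ 0}. -/
/-- The coordinate subspace of vectors vanishing on the support of `σ`. -/
def zeroOnSupp {m : ℕ} (σ : Fin m → SignType) : Submodule ℝ (Fin m → ℝ) where
  carrier := {y | ∀ i, σ i ≠ 0 → y i = 0}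
  add_mem' := by
    intro a b ha hb i hi
    simp [Pi.add_apply, ha i hi, hb i hi]
  zero_mem' := by intro i _; rfl
  smul_mem' := by
    intro c a ha i hi
    simp [Pi.smul_apply, ha i hi]

/-- for `x ∉ L` with `σ = type_L(x)`, the affine hull of the set of
`l∞`-closest points of `L` to `x` has the same dimension as
`L(σ) = {y ∈ L : y_i = 0 whenever σ_i ≠ 0}`. -/
theorem dim_closestPts_eq_dim_Lsigma (m : ℕ) (L : Submodule ℝ (Fin m → ℝ))
    (x : Fin m → ℝ) (hx : x ∉ L) :
    Module.finrank ℝ (affineSpan ℝ (closestPts x (L : Set (Fin m → ℝ)))).direction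
      = Module.finrank ℝ (L ⊓ zeroOnSupp (typeL L x) : Submodule ℝ (Fin m → ℝ)) := by
  classical
  have hm : 0 < m := by
    rcases Nat.eq_zero_or_pos m with h | h
    · subst h
      exact absurd (by have : x = 0 := funext fun i => i.elim0; rw [this]; exact L.zero_mem) hx
    · exact h
  set S : Set (Fin m → ℝ) := (L : Set (Fin m → ℝ)) with hSdef
  set r : ℝ := Metric.infDist x S with hrdef
  set C : Set (Fin m → ℝ) := closestPts x S with hCdef
  set σ : Fin m → SignType := typeL L x with hσdef
  have hSne : S.Nonempty := ⟨0, L.zero_mem⟩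
  have hScl : IsClosed S := Submodule.closed_of_finiteDimensional L
  have hr : 0 < r := (hScl.notMem_iff_infDist_pos hSne).mp hx
  have hmemC : ∀ y, y ∈ C ↔ y ∈ S ∧ dist x y = r := fun y => Iff.rfl
  obtain ⟨y₀, hy₀S, hy₀d⟩ := hScl.exists_infDist_eq_dist hSne x
  have hy₀C : y₀ ∈ C := ⟨hy₀S, hy₀d.symm⟩
  have hcoord : ∀ y ∈ C, ∀ i, |x i - y i| ≤ r := by
    intro y hy i
    have h1 := dist_le_pi_dist x y i
    rw [hy.2] at h1
    simpa [Real.dist_eq] using h1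
  -- convexity of C
  have hCconv : Convex ℝ C := by
    have hCeq : C = S ∩ Metric.closedBall x r := by
      ext y
      constructor
      · intro h; exact ⟨h.1, by rw [Metric.mem_closedBall, dist_comm]; exact h.2.le⟩
      · intro h
        exact ⟨h.1, le_antisymm (by rw [dist_comm]; exact h.2)
          (Metric.infDist_le_dist_of_mem h.1)⟩
    rw [hCeq]
    exact (Submodule.convex L).inter (convex_closedBall x r)
  -- type extraction lemmas
  have htype0 : ∀ i, σ i = 0 →
      (∃ y ∈ C, y i ≠ x i + r) ∧ (∃ y ∈ C, y i ≠ x i - r) := by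
    intro i h
    rw [hσdef] at h
    unfold typeL at h
    rw [if_neg hx] at h
    by_cases h1 : ∀ y ∈ closestPts x (L : Set (Fin m → ℝ)),
        y i = x i + Metric.infDist x (L : Set (Fin m → ℝ))
    · rw [if_pos h1] at h; exact absurd h (by decide)
    · rw [if_neg h1] at h
      by_cases h2 : ∀ y ∈ closestPts x (L : Set (Fin m → ℝ)),
          y i = x i - Metric.infDist x (L : Set (Fin m → ℝ))
      · rw [if_pos h2] at h; exact absurd h (by decide)
      · push_neg at h1 h2
        exact ⟨h1, h2⟩
  have htype1 : ∀ i, σ i ≠ 0 → ∀ y ∈ C, ∀ z ∈ C, y i = z i := by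
    intro i h
    rw [hσdef] at h
    unfold typeL at h
    rw [if_neg hx] at h
    by_cases h1 : ∀ y ∈ closestPts x (L : Set (Fin m → ℝ)),
        y i = x i + Metric.infDist x (L : Set (Fin m → ℝ))
    · intro y hy z hz
      rw [h1 y hy, h1 z hz]
    · rw [if_neg h1] at h
      by_cases h2 : ∀ y ∈ closestPts x (L : Set (Fin m → ℝ)),
          y i = x i - Metric.infDist x (L : Set (Fin m → ℝ))
      · intro y hy z hz
        rw [h2 y hy, h2 z hz]
      · rw [if_neg h2] at h
        exact absurd rfl h
  -- the barycentric point z₀, strictly inside on free coordinates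
  have hwitness : ∀ p : Fin m × Bool, ∃ y ∈ C,
      (σ p.1 = 0 → (if p.2 then y p.1 ≠ x p.1 + r else y p.1 ≠ x p.1 - r)) := by
    rintro ⟨i, b⟩
    by_cases h : σ i = 0
    · obtain ⟨⟨y1, hy1, hne1⟩, ⟨y2, hy2, hne2⟩⟩ := htype0 i h
      cases b
      · exact ⟨y2, hy2, fun _ => by simpa using hne2⟩
      · exact ⟨y1, hy1, fun _ => by simpa using hne1⟩
    · exact ⟨y₀, hy₀C, fun h' => absurd h' h⟩
  choose P hPC hPne using hwitness
  set w : ℝ := ((m : ℝ) * 2)⁻¹ with hwdef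
  have hwpos : 0 < w := by
    rw [hwdef]
    positivity
  have hwsum : ∑ _p : Fin m × Bool, w = 1 := by
    rw [Finset.sum_const, Finset.card_univ, Fintype.card_prod, Fintype.card_fin,
      Fintype.card_bool, nsmul_eq_mul, hwdef]
    push_cast
    field_simp
  set z₀ : Fin m → ℝ := ∑ p : Fin m × Bool, w • P p with hz₀def
  have hz₀C : z₀ ∈ C :=
    hCconv.sum_mem (fun _ _ => hwpos.le) hwsum (fun p _ => hPC p)
  have hz₀i : ∀ i, z₀ i - x i = ∑ p : Fin m × Bool, w * (P p i - x i) := by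
    intro i
    have : z₀ i = ∑ p : Fin m × Bool, w * P p i := by
      rw [hz₀def]
      simp [Finset.sum_apply]
    rw [this]
    calc ∑ p : Fin m × Bool, w * P p i - x i
        = ∑ p : Fin m × Bool, w * P p i - ∑ _p : Fin m × Bool, w * x i := by
          rw [← Finset.sum_mul, hwsum, one_mul]
      _ = ∑ p : Fin m × Bool, (w * P p i - w * x i) := (Finset.sum_sub_distrib ..).symm
      _ = ∑ p : Fin m × Bool, w * (P p i - x i) := by simp [mul_sub]
  have hstrict : ∀ i, σ i = 0 → |z₀ i - x i| < r := by
    intro i h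
    rw [abs_lt, hz₀i i]
    constructor
    · have hlow : ∑ _p : Fin m × Bool, w * (-r) < ∑ p : Fin m × Bool, w * (P p i - x i) := by
        apply Finset.sum_lt_sum
        · intro p _
          have := hcoord (P p) (hPC p) i
          have h2 : x i - P p i ≤ r := (abs_le.mp this).2
          nlinarith [hwpos]
        · refine ⟨(i, false), Finset.mem_univ _, ?_⟩
          have hne := hPne (i, false) h
          simp only [Bool.false_eq_true, if_false] at hne
          have hle := hcoord (P (i, false)) (hPC (i, false)) i
          have h2 : x i - P (i, false) i ≤ r := (abs_le.mp hle).2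
          have h3 : P (i, false) i - x i ≠ -r := by
            intro hc
            apply hne
            linarith
          have : -r < P (i, false) i - x i := lt_of_le_of_ne (by linarith) (Ne.symm h3)
          nlinarith [hwpos]
      calc -r = ∑ _p : Fin m × Bool, w * (-r) := by
                rw [← Finset.sum_mul, hwsum, one_mul]
        _ < _ := hlow
    · have hhigh : ∑ p : Fin m × Bool, w * (P p i - x i) < ∑ _p : Fin m × Bool, w * r := by
        apply Finset.sum_lt_sum
        · intro p _
          have := hcoord (P p) (hPC p) i
          have h2 : -(r) ≤ x i - P p i := (abs_le.mp this).1
          nlinarith [hwpos]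
        · refine ⟨(i, true), Finset.mem_univ _, ?_⟩
          have hne := hPne (i, true) h
          simp only [if_true] at hne
          have hle := hcoord (P (i, true)) (hPC (i, true)) i
          have h2 : -(r) ≤ x i - P (i, true) i := (abs_le.mp hle).1
          have h3 : P (i, true) i - x i ≠ r := by
            intro hc
            apply hne
            linarith
          have : P (i, true) i - x i < r := lt_of_le_of_ne (by linarith) h3
          nlinarith [hwpos]
      calc ∑ p : Fin m × Bool, w * (P p i - x i) < ∑ _p : Fin m × Bool, w * r := hhigh
        _ = r := by rw [← Finset.sum_mul, hwsum, one_mul]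
  -- main submodule equality
  have hdir : (affineSpan ℝ C).direction = L ⊓ zeroOnSupp σ := by
    apply le_antisymm
    · rw [direction_affineSpan, vectorSpan_def, Submodule.span_le]
      rintro u ⟨a, ha, b, hb, rfl⟩
      rw [SetLike.mem_coe, Submodule.mem_inf]
      constructor
      · exact L.sub_mem ha.1 hb.1
      · intro i hi
        have := htype1 i hi a ha b hb
        show a i - b i = 0
        rw [this, sub_self]
    · rintro v hv
      rw [Submodule.mem_inf] at hv
      obtain ⟨hvL, hvZ⟩ := hv
      by_cases hv0 : v = 0
      · rw [hv0]; exact Submodule.zero_mem _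
      · set T : Finset (Fin m) := Finset.univ.filter (fun i => v i ≠ 0) with hTdef
        have hT : T.Nonempty := by
          obtain ⟨i, hi⟩ := Function.ne_iff.mp hv0
          exact ⟨i, Finset.mem_filter.mpr ⟨Finset.mem_univ _, hi⟩⟩
        have hσT : ∀ i ∈ T, σ i = 0 := by
          intro i hi
          by_contra h
          exact (Finset.mem_filter.mp hi).2 (hvZ i h)
        set t : ℝ := T.inf' hT (fun i => (r - |z₀ i - x i|) / |v i|) with htdef
        have ht : 0 < t := by
          rw [htdef, Finset.lt_inf'_iff]
          intro i hi
          exact div_pos (sub_pos.mpr (hstrict i (hσT i hi)))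
            (abs_pos.mpr (Finset.mem_filter.mp hi).2)
        set z₁ : Fin m → ℝ := z₀ + t • v with hz₁def
        have hz₁L : z₁ ∈ L := L.add_mem hz₀C.1 (L.smul_mem t hvL)
        have hz₁C : z₁ ∈ C := by
          refine ⟨hz₁L, le_antisymm ?_ (Metric.infDist_le_dist_of_mem hz₁L)⟩
          rw [dist_pi_le_iff hr.le]
          intro i
          rw [Real.dist_eq]
          by_cases hvi : v i = 0
          · have : z₁ i = z₀ i := by simp [hz₁def, hvi]
            rw [this]
            exact hcoord z₀ hz₀C i
          · have hiT : i ∈ T := Finset.mem_filter.mpr ⟨Finset.mem_univ _, hvi⟩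
            have hle : t ≤ (r - |z₀ i - x i|) / |v i| := Finset.inf'_le _ hiT
            have h1 : t * |v i| ≤ r - |z₀ i - x i| :=
              (le_div_iff₀ (abs_pos.mpr hvi)).mp hle
            have h2 : |x i - z₁ i| ≤ |x i - z₀ i| + |t * v i| := by
              have : x i - z₁ i = (x i - z₀ i) - t * v i := by
                simp [hz₁def]; ring
              rw [this]
              exact abs_sub (x i - z₀ i) (t * v i)
            calc |x i - z₁ i| ≤ |x i - z₀ i| + |t * v i| := h2
              _ = |z₀ i - x i| + t * |v i| := by
                  rw [abs_sub_comm, abs_mul, abs_of_pos ht]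
              _ ≤ r := by linarith
        have hsubdir : z₁ - z₀ ∈ (affineSpan ℝ C).direction :=
          AffineSubspace.vsub_mem_direction (subset_affineSpan ℝ C hz₁C)
            (subset_affineSpan ℝ C hz₀C)
        have hveq : v = t⁻¹ • (z₁ - z₀) := by
          rw [hz₁def, add_sub_cancel_left, smul_smul, inv_mul_cancel₀ ht.ne', one_smul]
        rw [hveq]
        exact Submodule.smul_mem _ _ hsubdir
  rw [hdir]
end

section
/- Let L ⊆ ℝ^m be a linear subspace of dimension d. Then the l∞-closest point to x in L is unique for every x ∈ ℝ^m (i.e., C(x,L) is a singleton for all x) if and only if every nonzero vector c ∈ ℝ^m satisfying ⟨c,y⟩ = 0 for all y ∈ L has at least d + 1 nonzero coordinates. (The latter condition says exactly that the matroid underlying the oriented matroid of L is the uniform matroid U_{d,m}.) -/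
section Aux

open Metric Finset Module

variable {m : ℕ}

private lemma abs_sub_le'' (a b : ℝ) : |a - b| ≤ |a| + |b| := by
  calc |a - b| = |a + (-b)| := by ring_nf
    _ ≤ |a| + |-b| := abs_add_le _ _
    _ = |a| + |b| := by rw [abs_neg]

/-- Evaluation of elements of `L` on the coordinates in `A`. -/
noncomputable def evalMap (L : Submodule ℝ (Fin m → ℝ)) (A : Finset (Fin m)) :
    L →ₗ[ℝ] ({x : Fin m // x ∈ A} → ℝ) :=
  (LinearMap.pi fun i : A => LinearMap.proj (i : Fin m)).comp L.subtype

lemma evalMap_apply (L : Submodule ℝ (Fin m → ℝ)) (A : Finset (Fin m)) (y : L) (j : A) :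
    evalMap L A y j = (y : Fin m → ℝ) j := rfl

lemma key_surj (L : Submodule ℝ (Fin m → ℝ)) (d : ℕ)
    (H : ∀ c : Fin m → ℝ, c ≠ 0 → (∀ y ∈ L, ∑ i, c i * y i = 0) →
      d + 1 ≤ {i | c i ≠ 0}.ncard)
    (A : Finset (Fin m)) (hA : A.card ≤ d) :
    Function.Surjective (evalMap L A) := by
  classical
  rw [← LinearMap.range_eq_top]
  by_contra hne
  obtain ⟨f, hf0, hfbot⟩ := Submodule.exists_dual_map_eq_bot_of_lt_top
      (lt_top_iff_ne_top.mpr hne) inferInstance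
  set cA : {x : Fin m // x ∈ A} → ℝ := fun j => f (fun k => if j = k then 1 else 0) with hcA
  set c : Fin m → ℝ := fun i => if h : i ∈ A then cA ⟨i, h⟩ else 0 with hc
  have hrep : ∀ z : {x : Fin m // x ∈ A} → ℝ, f z = ∑ j, z j * cA j := by
    intro z
    rw [LinearMap.pi_apply_eq_sum_univ f z]
    simp [hcA, smul_eq_mul]
  have hcval : ∀ j : {x : Fin m // x ∈ A}, c (j : Fin m) = cA j := by
    intro j; simp [hc, j.2]
  have hann : ∀ y ∈ L, ∑ i, c i * y i = 0 := by
    intro y hy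
    have hmem : evalMap L A ⟨y, hy⟩ ∈ LinearMap.range (evalMap L A) := ⟨_, rfl⟩
    have hfz : f (evalMap L A ⟨y, hy⟩) = 0 := by
      have h1 : f (evalMap L A ⟨y, hy⟩) ∈ Submodule.map f (LinearMap.range (evalMap L A)) :=
        Submodule.mem_map_of_mem hmem
      rw [hfbot] at h1
      simpa using h1
    have hsplit : ∑ i, c i * y i = ∑ i ∈ A, c i * y i := by
      refine (Finset.sum_subset (Finset.subset_univ A) ?_).symm
      intro i _ hi
      simp [hc, hi]
    rw [hsplit, ← Finset.sum_attach A (fun i => c i * y i), ← hfz, hrep]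
    refine Finset.sum_congr rfl fun j _ => ?_
    rw [evalMap_apply, hcval j, mul_comm]
  have hcne : c ≠ 0 := by
    intro h0
    apply hf0
    have hcA0 : ∀ j : {x : Fin m // x ∈ A}, cA j = 0 := by
      intro j; rw [← hcval j, h0]; rfl
    apply LinearMap.ext
    intro z
    rw [hrep]
    simp [hcA0]
  have hsupp : {i | c i ≠ 0} ⊆ (A : Set (Fin m)) := by
    intro i hi
    by_contra hiA
    apply hi
    have hnA : i ∉ A := fun h => hiA (Finset.mem_coe.mpr h)
    simp [hc, hnA]
  have hcard : {i | c i ≠ 0}.ncard ≤ A.card := by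
    rw [← Set.ncard_coe_finset A]
    exact Set.ncard_le_ncard hsupp A.finite_toSet
  have := H c hcne hann
  omega

lemma key_inj (L : Submodule ℝ (Fin m → ℝ)) (d : ℕ) (hd : Module.finrank ℝ L = d)
    (H : ∀ c : Fin m → ℝ, c ≠ 0 → (∀ y ∈ L, ∑ i, c i * y i = 0) →
      d + 1 ≤ {i | c i ≠ 0}.ncard)
    (A : Finset (Fin m)) (hA : d ≤ A.card)
    (v : Fin m → ℝ) (hv : v ∈ L) (hz : ∀ i ∈ A, v i = 0) : v = 0 := by
  obtain ⟨B, hBA, hB⟩ := Finset.exists_subset_card_eq hA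
  have hsurj := key_surj L d H B (le_of_eq hB)
  have hfr : Module.finrank ℝ L = Module.finrank ℝ ({x : Fin m // x ∈ B} → ℝ) := by
    rw [hd, Module.finrank_fintype_fun_eq_card, Fintype.card_coe, hB]
  have hinj := (LinearMap.injective_iff_surjective_of_finrank_eq_finrank hfr).mpr hsurj
  have hv0 : evalMap L B ⟨v, hv⟩ = 0 := by
    funext j
    exact hz (j : Fin m) (hBA j.2)
  have : (⟨v, hv⟩ : L) = 0 := hinj (by simpa using hv0)
  simpa using congrArg Subtype.val this

lemma key_ker (L : Submodule ℝ (Fin m → ℝ)) (d : ℕ) (hd : Module.finrank ℝ L = d)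
    (c : Fin m → ℝ) (hc : c ≠ 0) (hann : ∀ y ∈ L, ∑ i, c i * y i = 0)
    (S : Finset (Fin m)) (hSmem : ∀ i, i ∈ S ↔ c i ≠ 0) (hS : S.card ≤ d) :
    ∃ v, v ∈ L ∧ v ≠ 0 ∧ ∀ i ∈ S, v i = 0 := by
  classical
  by_cases hinj : Function.Injective (evalMap L S)
  · exfalso
    have h1 : d ≤ S.card := by
      have := LinearMap.finrank_le_finrank_of_injective hinj
      rwa [hd, Module.finrank_fintype_fun_eq_card, Fintype.card_coe] at this
    have hcard : S.card = d := le_antisymm hS h1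
    have hfr : Module.finrank ℝ L = Module.finrank ℝ ({x : Fin m // x ∈ S} → ℝ) := by
      rw [hd, Module.finrank_fintype_fun_eq_card, Fintype.card_coe, hcard]
    have hsurj := (LinearMap.injective_iff_surjective_of_finrank_eq_finrank hfr).mp hinj
    obtain ⟨y, hy⟩ := hsurj (fun j => c (j : Fin m))
    have h0 := hann (y : Fin m → ℝ) y.2
    have hyval : ∀ i (hi : i ∈ S), (y : Fin m → ℝ) i = c i := by
      intro i hi
      have := congrFun hy ⟨i, hi⟩
      rwa [evalMap_apply] at this
    have hsplit : ∑ i, c i * (y : Fin m → ℝ) i = ∑ i ∈ S, c i * c i := by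
      have h1 : ∑ i, c i * (y : Fin m → ℝ) i = ∑ i ∈ S, c i * (y : Fin m → ℝ) i := by
        refine (Finset.sum_subset (Finset.subset_univ S) ?_).symm
        intro i _ hi
        have hci : c i = 0 := by
          by_contra h; exact hi ((hSmem i).mpr h)
        simp [hci]
      rw [h1]
      exact Finset.sum_congr rfl fun i hi => by rw [hyval i hi]
    obtain ⟨i0, hi0⟩ := Function.ne_iff.mp hc
    have hpos : 0 < ∑ i ∈ S, c i * c i := by
      refine Finset.sum_pos' (fun i _ => mul_self_nonneg _) ⟨i0, (hSmem i0).mpr hi0, ?_⟩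
      exact mul_self_pos.mpr hi0
    rw [hsplit] at h0
    exact hpos.ne' h0
  · have hker : LinearMap.ker (evalMap L S) ≠ ⊥ := by
      intro h
      exact hinj (LinearMap.ker_eq_bot.mp h)
    obtain ⟨w, hwker, hwne⟩ := (Submodule.ne_bot_iff _).mp hker
    refine ⟨(w : Fin m → ℝ), w.2, ?_, ?_⟩
    · intro h
      exact hwne (Subtype.ext h)
    · intro i hi
      have h0 : evalMap L S w = 0 := LinearMap.mem_ker.mp hwker
      have := congrFun h0 ⟨i, hi⟩
      rwa [evalMap_apply] at this
    
end Aux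

/-- the `l∞`-closest point of `L` to `x` is unique for every `x` if and only
if every nonzero linear functional vanishing on `L` has at least `d + 1` nonzero
coordinates (i.e. the matroid underlying the oriented matroid of `L` is uniform `U_{d,m}`),
where `d = dim L`. -/
theorem closest_unique_iff_uniform (m : ℕ) (L : Submodule ℝ (Fin m → ℝ)) (d : ℕ)
    (hd : Module.finrank ℝ L = d) :
    (∀ x : Fin m → ℝ, ∃! y, y ∈ closestPts x (L : Set (Fin m → ℝ))) ↔
    (∀ c : Fin m → ℝ, c ≠ 0 → (∀ y ∈ L, ∑ i, c i * y i = 0) →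
      d + 1 ≤ {i | c i ≠ 0}.ncard) := by
  classical
  have hclosed : IsClosed (L : Set (Fin m → ℝ)) := Submodule.closed_of_finiteDimensional L
  have hLne : (L : Set (Fin m → ℝ)).Nonempty := ⟨0, L.zero_mem⟩
  constructor
  · -- uniqueness implies uniformity
    intro Huniq c hc hann
    by_contra hlt
    push_neg at hlt
    set S : Finset (Fin m) := Finset.univ.filter (fun i => c i ≠ 0) with hSdef
    have hSmem : ∀ i, i ∈ S ↔ c i ≠ 0 := by intro i; simp [hSdef]
    have hncard : {i | c i ≠ 0}.ncard = S.card := by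
      rw [← Set.ncard_coe_finset]
      congr 1
      ext i
      simp [hSdef]
    have hScard : S.card ≤ d := by omega
    obtain ⟨v, hvL, hvne, hvS⟩ := key_ker L d hd c hc hann S hSmem hScard
    set N := dist v 0 with hNdef
    have hN : 0 < N := dist_pos.mpr hvne
    set u : Fin m → ℝ := N⁻¹ • v with hudef
    have huL : u ∈ L := L.smul_mem _ hvL
    have hune : u ≠ 0 := smul_ne_zero (inv_ne_zero hN.ne') hvne
    have hub : ∀ i, |u i| ≤ 1 := by
      intro i
      have h1 : |v i| ≤ N := by
        have := dist_le_pi_dist v 0 i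
        simpa [Real.dist_eq, hNdef] using this
      have h2 : |u i| = |v i| / N := by
        rw [hudef]
        simp [abs_mul, abs_inv, abs_of_pos hN, div_eq_inv_mul]
      rw [h2]
      exact div_le_one_of_le₀ h1 hN.le
    set x : Fin m → ℝ := fun i => if 0 < c i then 1 else if c i < 0 then -1 else 0 with hxdef
    have hcx : ∀ i, c i * x i = |c i| := by
      intro i
      rcases lt_trichotomy (c i) 0 with h | h | h
      · rw [hxdef]
        simp only [not_lt_of_gt h, if_neg, h, if_pos]
        rw [abs_of_neg h]
        simp [not_lt.mpr h.le]
      · simp [hxdef, h]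
      · rw [hxdef]
        simp only [h, if_pos]
        rw [abs_of_pos h]
        simp [h]
    have hxb : ∀ i, |x i| ≤ 1 := by
      intro i
      rw [hxdef]
      dsimp only
      split_ifs <;> norm_num
    have hx0 : ∀ i, c i = 0 → x i = 0 := by
      intro i h
      simp [hxdef, h]
    have hsum : 0 < ∑ i, |c i| := by
      obtain ⟨i0, hi0⟩ := Function.ne_iff.mp hc
      exact Finset.sum_pos' (fun i _ => abs_nonneg _) ⟨i0, Finset.mem_univ _, abs_pos.mpr hi0⟩
    have hlb : ∀ y ∈ L, (1 : ℝ) ≤ dist x y := by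
      intro y hy
      have h0 := hann y hy
      have key : ∑ i, |c i| = ∑ i, c i * (x i - y i) := by
        have : ∑ i, c i * (x i - y i) = ∑ i, c i * x i - ∑ i, c i * y i := by
          rw [← Finset.sum_sub_distrib]
          exact Finset.sum_congr rfl fun i _ => by ring
        rw [this, h0, sub_zero]
        exact (Finset.sum_congr rfl fun i _ => (hcx i).symm)
      have hb : ∑ i, c i * (x i - y i) ≤ (∑ i, |c i|) * dist x y := by
        calc ∑ i, c i * (x i - y i) ≤ ∑ i, |c i * (x i - y i)| :=
              Finset.sum_le_sum fun i _ => le_abs_self _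
          _ = ∑ i, |c i| * |x i - y i| := by
              exact Finset.sum_congr rfl fun i _ => abs_mul _ _
          _ ≤ ∑ i, |c i| * dist x y := by
              refine Finset.sum_le_sum fun i _ => ?_
              refine mul_le_mul_of_nonneg_left ?_ (abs_nonneg _)
              have := dist_le_pi_dist x y i
              rwa [Real.dist_eq] at this
          _ = (∑ i, |c i|) * dist x y := by rw [← Finset.sum_mul]
      rw [key] at hsum
      nlinarith [key ▸ hb]
    have hx0L : dist x (0 : Fin m → ℝ) = 1 := by
      obtain ⟨i0, hi0⟩ := Function.ne_iff.mp hc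
      refine le_antisymm ((dist_pi_le_iff one_pos.le).mpr fun i => by
        simpa [Real.dist_eq] using hxb i) ?_
      have h1 : |x i0| = 1 := by
        rcases lt_trichotomy (c i0) 0 with h | h | h
        · simp [hxdef, not_lt_of_gt h, h]
        · exact absurd h hi0
        · simp [hxdef, h]
      have h2 := dist_le_pi_dist x (0 : Fin m → ℝ) i0
      rw [Real.dist_eq] at h2
      simp only [Pi.zero_apply, sub_zero] at h2
      rw [h1] at h2
      exact h2
    have hinf : Metric.infDist x (L : Set (Fin m → ℝ)) = 1 := by
      refine le_antisymm (le_trans (Metric.infDist_le_dist_of_mem L.zero_mem) hx0L.le) ?_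
      obtain ⟨y0, hy0L, hy0d⟩ := hclosed.exists_infDist_eq_dist hLne x
      rw [hy0d]
      exact hlb y0 hy0L
    have hdxu : dist x u = 1 := by
      refine le_antisymm ((dist_pi_le_iff one_pos.le).mpr ?_) ?_
      · intro i
        rw [Real.dist_eq]
        by_cases hci : c i = 0
        · rw [hx0 i hci]
          simpa using hub i
        · have hui : u i = 0 := by
            have hv0 : v i = 0 := hvS i ((hSmem i).mpr hci)
            simp [hudef, hv0]
          rw [hui, sub_zero]
          exact hxb i
      · rw [← hinf]
        exact Metric.infDist_le_dist_of_mem huL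
    obtain ⟨w, hw, hwuniq⟩ := Huniq x
    have h1 : (0 : Fin m → ℝ) = w := hwuniq 0 ⟨L.zero_mem, by rw [hx0L, hinf]⟩
    have h2 : u = w := hwuniq u ⟨huL, by rw [hdxu, hinf]⟩
    exact hune (h2.trans h1.symm)
  · -- uniformity implies uniqueness
    intro H x
    obtain ⟨y0, hy0L, hy0d⟩ := hclosed.exists_infDist_eq_dist hLne x
    have huniq : ∀ y₁ y₂, y₁ ∈ closestPts x (L : Set (Fin m → ℝ)) →
        y₂ ∈ closestPts x (L : Set (Fin m → ℝ)) → y₁ = y₂ := by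
      rintro y₁ y₂ ⟨h1L, h1d⟩ ⟨h2L, h2d⟩
      by_contra hne
      set r := Metric.infDist x (L : Set (Fin m → ℝ)) with hrdef
      have hrnn : (0 : ℝ) ≤ r := Metric.infDist_nonneg
      have hrpos : 0 < r := by
        rcases eq_or_lt_of_le hrnn with h | h
        · exfalso
          apply hne
          have e1 : x = y₁ := dist_eq_zero.mp (by rw [h1d, ← h])
          have e2 : x = y₂ := dist_eq_zero.mp (by rw [h2d, ← h])
          rw [← e1, ← e2]
        · exact h
      set y : Fin m → ℝ := (1/2 : ℝ) • (y₁ + y₂) with hydef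
      have hyL : y ∈ L := L.smul_mem _ (L.add_mem h1L h2L)
      set v : Fin m → ℝ := y₁ - y₂ with hvdef
      have hvL : v ∈ L := L.sub_mem h1L h2L
      have hvne : v ≠ 0 := sub_ne_zero.mpr hne
      have hb1 : ∀ i, |x i - y₁ i| ≤ r := by
        intro i
        have := dist_le_pi_dist x y₁ i
        rw [Real.dist_eq, h1d] at this
        exact this
      have hb2 : ∀ i, |x i - y₂ i| ≤ r := by
        intro i
        have := dist_le_pi_dist x y₂ i
        rw [Real.dist_eq, h2d] at this
        exact this
      have hby : ∀ i, |x i - y i| ≤ r := by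
        intro i
        have hco : x i - y i = ((x i - y₁ i) + (x i - y₂ i)) / 2 := by
          rw [hydef]
          simp only [Pi.smul_apply, Pi.add_apply, smul_eq_mul]
          ring
        rw [hco]
        obtain ⟨ha1, ha2⟩ := abs_le.mp (hb1 i)
        obtain ⟨hb1', hb2'⟩ := abs_le.mp (hb2 i)
        rw [abs_le]
        constructor <;> [linarith; linarith]
      have hyd : dist x y = r := by
        refine le_antisymm ((dist_pi_le_iff hrnn).mpr fun i => by
          rw [Real.dist_eq]; exact hby i) ?_
        exact Metric.infDist_le_dist_of_mem hyL
      set A : Finset (Fin m) := Finset.univ.filter (fun i => |x i - y i| = r) with hAdef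
      have hvA : ∀ i ∈ A, v i = 0 := by
        intro i hi
        have heq : |x i - y i| = r := by
          rw [hAdef] at hi
          exact (Finset.mem_filter.mp hi).2
        have hco : x i - y i = ((x i - y₁ i) + (x i - y₂ i)) / 2 := by
          rw [hydef]
          simp only [Pi.smul_apply, Pi.add_apply, smul_eq_mul]
          ring
        rw [hco] at heq
        obtain ⟨ha1, ha2⟩ := abs_le.mp (hb1 i)
        obtain ⟨hc1, hc2⟩ := abs_le.mp (hb2 i)
        have hvv : v i = y₁ i - y₂ i := rfl
        rcases (abs_eq hrnn).mp heq with h | h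
        · rw [hvv]; linarith
        · rw [hvv]; linarith
      by_cases hAc : A.card ≤ d
      · -- decrease the distance: contradiction with optimality
        obtain ⟨w', hw'⟩ := key_surj L d H A hAc (fun j => x (j : Fin m) - y (j : Fin m))
        set w : Fin m → ℝ := (w' : Fin m → ℝ) with hwdef
        have hwL : w ∈ L := w'.2
        have hwA : ∀ i ∈ A, w i = x i - y i := by
          intro i hi
          have := congrFun hw' ⟨i, hi⟩
          rwa [evalMap_apply] at this
        obtain ⟨i₀, hi₀⟩ := Function.ne_iff.mp hvne
        set h : Fin m → ℝ := fun i =>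
          if |x i - y i| = r then (1:ℝ)/2
          else min ((1:ℝ)/2) ((r - |x i - y i|) / (1 + |w i|)) with hhdef
        have hune' : (Finset.univ : Finset (Fin m)).Nonempty := ⟨i₀, Finset.mem_univ _⟩
        set ε : ℝ := Finset.univ.inf' hune' h with hεdef
        have hpos : ∀ i, 0 < h i := by
          intro i
          rw [hhdef]
          dsimp only
          split_ifs with hcase
          · norm_num
          · refine lt_min (by norm_num) ?_
            have h1 : |x i - y i| < r := lt_of_le_of_ne (hby i) hcase
            have h2 : (0:ℝ) < 1 + |w i| := by positivity
            exact div_pos (by linarith) h2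
        have hεpos : 0 < ε := by
          rw [hεdef, Finset.lt_inf'_iff]
          exact fun i _ => hpos i
        have hεle : ∀ i, ε ≤ h i := fun i => Finset.inf'_le _ (Finset.mem_univ i)
        have hεhalf : ε ≤ 1/2 := by
          refine le_trans (hεle i₀) ?_
          rw [hhdef]
          dsimp only
          split_ifs
          · exact le_refl _
          · exact min_le_left _ _
        have hy'L : y + ε • w ∈ L := L.add_mem hyL (L.smul_mem _ hwL)
        have hlt : dist x (y + ε • w) < r := by
          rw [dist_pi_lt_iff hrpos]
          intro i
          rw [Real.dist_eq]
          have hexpand : x i - (y + ε • w) i = (x i - y i) - ε * w i := by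
            simp only [Pi.add_apply, Pi.smul_apply, smul_eq_mul]
            ring
          rw [hexpand]
          by_cases hcase : |x i - y i| = r
          · have hiA : i ∈ A := by
              rw [hAdef]
              exact Finset.mem_filter.mpr ⟨Finset.mem_univ _, hcase⟩
            rw [hwA i hiA]
            have : x i - y i - ε * (x i - y i) = (1 - ε) * (x i - y i) := by ring
            rw [this, abs_mul, abs_of_pos (by linarith : (0:ℝ) < 1 - ε), hcase]
            nlinarith
          · have hs : |x i - y i| < r := lt_of_le_of_ne (hby i) hcase
            have hεi := hεle i
            rw [hhdef] at hεi
            dsimp only at hεi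
            rw [if_neg hcase] at hεi
            have hεi2 : ε ≤ (r - |x i - y i|) / (1 + |w i|) :=
              le_trans hεi (min_le_right _ _)
            have hwpos : (0:ℝ) < 1 + |w i| := by positivity
            have h3 : ε * (1 + |w i|) ≤ r - |x i - y i| := by
              rw [← le_div_iff₀ hwpos]
              exact hεi2
            have h4 : ε * |w i| < r - |x i - y i| := by nlinarith
            calc |x i - y i - ε * w i| ≤ |x i - y i| + |ε * w i| := abs_sub_le'' _ _
              _ = |x i - y i| + ε * |w i| := by rw [abs_mul, abs_of_pos hεpos]
              _ < r := by linarith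
        have hge : r ≤ dist x (y + ε • w) :=
          Metric.infDist_le_dist_of_mem (x := x) hy'L
        linarith
      · -- the active set is large: v must vanish
        have hAd : d ≤ A.card := le_of_not_ge hAc
        exact hvne (key_inj L d hd H A hAd v hvL hvA)
    exact ⟨y0, ⟨hy0L, hy0d.symm⟩, fun y hy => huniq y y0 hy ⟨hy0L, hy0d.symm⟩⟩
end

section
/- Let L ⊆ ℝ^m be a proper linear subspace and let σ be a nonzero sign vector in the oriented matroid O_L. Then the set {x ∈ ℝ^m : type_L(x) = σ} has nonempty interior in ℝ^m if and only if σ is a signed circuit of O_L, i.e., its support {i : σ_i ≠ 0} is minimal with respect to inclusion among supports of nonzero elements of O_L. -/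
open Metric Finset

namespace MyAux

/-- vectors vanishing on the support of `σ`. -/
def zeroOn {m : ℕ} (σ : Fin m → SignType) : Submodule ℝ (Fin m → ℝ) where
  carrier := {z | ∀ i, σ i ≠ 0 → z i = 0}
  add_mem' := by
    intro a b ha hb i hi
    simp only [Pi.add_apply, ha i hi, hb i hi, add_zero]
  zero_mem' := by intro i hi; rfl
  smul_mem' := by
    intro r a ha i hi
    simp only [Pi.smul_apply, ha i hi, smul_zero]

/-- the linear functional `z ↦ ∑ c i * z i`. -/
def dotL {m : ℕ} (c : Fin m → ℝ) : (Fin m → ℝ) →ₗ[ℝ] ℝ where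
  toFun z := ∑ i, c i * z i
  map_add' a b := by
    simp only [Pi.add_apply, mul_add]
    rw [Finset.sum_add_distrib]
  map_smul' r a := by
    simp only [Pi.smul_apply, smul_eq_mul, RingHom.id_apply]
    rw [Finset.mul_sum]
    apply Finset.sum_congr rfl
    intro i _
    ring

variable {m : ℕ}


variable {m : ℕ}

lemma abs_le_dist (x y : Fin m → ℝ) (i : Fin m) : |x i - y i| ≤ dist x y := by
  simpa [Real.dist_eq] using dist_le_pi_dist x y i

lemma dist_le_of_forall {x y : Fin m → ℝ} {r : ℝ} (hr : 0 ≤ r)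
    (h : ∀ i, |x i - y i| ≤ r) : dist x y ≤ r := by
  rw [dist_pi_le_iff hr]
  intro i
  simpa [Real.dist_eq] using h i

lemma closest_exists (L : Submodule ℝ (Fin m → ℝ)) (x : Fin m → ℝ) :
    ∃ y, y ∈ closestPts x (L : Set (Fin m → ℝ)) := by
  obtain ⟨y, hyL, hy⟩ := (L.closed_of_finiteDimensional).exists_infDist_eq_dist
    ⟨0, L.zero_mem⟩ x
  exact ⟨y, hyL, hy.symm⟩

lemma le_infDist_of (L : Submodule ℝ (Fin m → ℝ)) (x : Fin m → ℝ) {b : ℝ}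
    (h : ∀ y ∈ L, b ≤ dist x y) : b ≤ Metric.infDist x (L : Set (Fin m → ℝ)) := by
  by_contra hlt
  push_neg at hlt
  obtain ⟨y, hyL, hy⟩ := (Metric.infDist_lt_iff ⟨0, L.zero_mem⟩).1 hlt
  exact absurd hy (not_lt.2 (h y hyL))

/-- dual lower bound: `|⟨c,x⟩| ≤ ‖c‖₁ · d(x,L)` for `c ⟂ L`. -/
lemma abs_sum_le (L : Submodule ℝ (Fin m → ℝ)) (c x : Fin m → ℝ)
    (hc : ∀ y ∈ L, ∑ i, c i * y i = 0) :
    |∑ i, c i * x i| ≤ (∑ i, |c i|) * Metric.infDist x (L : Set (Fin m → ℝ)) := by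
  set A := ∑ i, |c i| with hA
  have hA0 : 0 ≤ A := Finset.sum_nonneg fun i _ => abs_nonneg _
  rcases eq_or_lt_of_le hA0 with h0 | hpos
  · have hc0 : ∀ i, c i = 0 := by
      intro i
      have := (Finset.sum_eq_zero_iff_of_nonneg (fun i _ => abs_nonneg (c i))).1 h0.symm i
        (Finset.mem_univ i)
      exact abs_eq_zero.1 this
    simp [hc0, ← h0]
  · have key : ∀ y ∈ L, |∑ i, c i * x i| ≤ A * dist x y := by
      intro y hy
      have h1 : ∑ i, c i * x i = ∑ i, c i * (x i - y i) := by
        have := hc y hy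
        rw [← sub_eq_zero]
        rw [← Finset.sum_sub_distrib]
        rw [← this]
        congr 1
        ext i
        ring
      rw [h1]
      calc |∑ i, c i * (x i - y i)| ≤ ∑ i, |c i * (x i - y i)| :=
            Finset.abs_sum_le_sum_abs _ _
        _ ≤ ∑ i, |c i| * dist x y := by
            apply Finset.sum_le_sum
            intro i _
            rw [abs_mul]
            exact mul_le_mul_of_nonneg_left (abs_le_dist x y i) (abs_nonneg _)
        _ = A * dist x y := by rw [← Finset.sum_mul]
    have := le_infDist_of L x (b := |∑ i, c i * x i| / A) (fun y hy => by
      rw [div_le_iff₀ hpos]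
      calc |∑ i, c i * x i| ≤ A * dist x y := key y hy
        _ = dist x y * A := mul_comm _ _)
    calc |∑ i, c i * x i| = |∑ i, c i * x i| / A * A := by field_simp
      _ ≤ Metric.infDist x (L : Set (Fin m → ℝ)) * A := by
          apply mul_le_mul_of_nonneg_right this hA0
      _ = A * Metric.infDist x (L : Set (Fin m → ℝ)) := mul_comm _ _



lemma not_mem_of_type_ne (L : Submodule ℝ (Fin m → ℝ)) {σ : Fin m → SignType}
    (hσ : σ ≠ 0) {x : Fin m → ℝ} (hx : typeL L x = σ) : x ∉ L := by
  intro hxL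
  apply hσ
  funext i
  have := congrFun hx i
  rw [typeL, if_pos hxL] at this
  exact this.symm

/-- If the type is `σ`, closest points are pinned on the support of `σ`. -/
lemma pinned_of_type (L : Submodule ℝ (Fin m → ℝ)) {σ : Fin m → SignType}
    (hσ : σ ≠ 0) {x : Fin m → ℝ} (hx : typeL L x = σ) :
    ∀ y ∈ closestPts x (L : Set (Fin m → ℝ)), ∀ i, σ i ≠ 0 →
      y i = x i + (σ i : ℝ) * Metric.infDist x (L : Set (Fin m → ℝ)) := by
  have hxL := not_mem_of_type_ne L hσ hx
  intro y hy i hi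
  have h := congrFun hx i
  rw [typeL, if_neg hxL] at h
  split_ifs at h with h1 h2
  · rw [← h]
    rw [SignType.coe_one, one_mul]
    exact h1 y hy
  · rw [← h]
    rw [SignType.coe_neg_one]
    rw [h2 y hy]; ring
  · exact absurd h.symm hi


/-- sign-vector as real vector has sup-norm ≤ 1 -/
lemma sign_abs_le (s : SignType) : |(s : ℝ)| ≤ 1 := by
  cases s <;> norm_num

lemma sign_abs_eq_one {s : SignType} (hs : s ≠ 0) : |(s : ℝ)| = 1 := by
  cases s
  · exact absurd rfl hs
  · norm_num
  · norm_num

lemma self_eq_abs_mul_sign (a : ℝ) : a = |a| * (SignType.sign a : ℝ) := by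
  rcases lt_trichotomy a 0 with h | h | h
  · rw [sign_neg h, SignType.coe_neg_one, abs_of_neg h]; ring
  · simp [h]
  · rw [sign_pos h, SignType.coe_one, abs_of_pos h]; ring

/-- linear relation satisfied on a type fiber: `⟨c,x⟩ + K·d(x,L) = 0`. -/
lemma fiber_lin_eq (L : Submodule ℝ (Fin m → ℝ)) {σ : Fin m → SignType}
    (hσ : σ ≠ 0) (c : Fin m → ℝ) (hcL : ∀ y ∈ L, ∑ i, c i * y i = 0)
    (hsupp : ∀ i, σ i = 0 → c i = 0) {x : Fin m → ℝ} (hx : typeL L x = σ) :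
    ∑ i, c i * x i
      + (∑ i, c i * (σ i : ℝ)) * Metric.infDist x (L : Set (Fin m → ℝ)) = 0 := by
  obtain ⟨y, hy⟩ := closest_exists L x
  have hyL : y ∈ L := hy.1
  have h0 : ∑ i, c i * y i = 0 := hcL y hyL
  set r := Metric.infDist x (L : Set (Fin m → ℝ)) with hr
  have hsum : ∑ i, c i * y i = ∑ i, (c i * x i + c i * (σ i : ℝ) * r) := by
    apply Finset.sum_congr rfl
    intro i _
    by_cases hci : c i = 0
    · simp [hci]
    · have hσi : σ i ≠ 0 := fun h => hci (hsupp i h)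
      rw [pinned_of_type L hσ hx y hy i hσi]
      ring
  rw [hsum] at h0
  rw [Finset.sum_add_distrib] at h0
  rw [← Finset.sum_mul] at h0
  exact h0

/-- moving in a direction vanishing at a support coordinate cannot decrease
the distance at full speed. -/
lemma step1 (L : Submodule ℝ (Fin m → ℝ)) {σ : Fin m → SignType}
    (hσ : σ ≠ 0) {x : Fin m → ℝ} (hx : typeL L x = σ) {i₀ : Fin m}
    (hi₀ : σ i₀ ≠ 0) {t : ℝ} (ht : 0 < t) {v : Fin m → ℝ}
    (hv0 : v i₀ = 0) (hv1 : ∀ j, |v j| ≤ 1) :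
    Metric.infDist x (L : Set (Fin m → ℝ)) - t
      < Metric.infDist (x + t • v) (L : Set (Fin m → ℝ)) := by
  set r := Metric.infDist x (L : Set (Fin m → ℝ)) with hrdef
  set z := x + t • v with hz
  set r' := Metric.infDist z (L : Set (Fin m → ℝ)) with hr'
  by_contra hle
  push_neg at hle
  obtain ⟨y, hy⟩ := closest_exists L z
  have hdzy : dist z y = r' := hy.2
  have hcoord : ∀ j, |z j - y j| ≤ r' := fun j => hdzy ▸ abs_le_dist z y j
  have hxz : ∀ j, |x j - z j| ≤ t * |v j| := by
    intro j
    rw [hz]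
    simp only [Pi.add_apply, Pi.smul_apply, smul_eq_mul]
    rw [show x j - (x j + t * v j) = -(t * v j) by ring, abs_neg, abs_mul,
      abs_of_pos ht]
  have hxy : ∀ j, |x j - y j| ≤ r := by
    intro j
    calc |x j - y j| ≤ |x j - z j| + |z j - y j| := abs_sub_le _ _ _
      _ ≤ t * |v j| + r' := add_le_add (hxz j) (hcoord j)
      _ ≤ t * 1 + (r - t) := add_le_add
          (mul_le_mul_of_nonneg_left (hv1 j) ht.le) hle
      _ = r := by ring
  have hyC : y ∈ closestPts x (L : Set (Fin m → ℝ)) := by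
    refine ⟨hy.1, le_antisymm ?_ (Metric.infDist_le_dist_of_mem hy.1)⟩
    exact dist_le_of_forall Metric.infDist_nonneg hxy
  have hpin := pinned_of_type L hσ hx y hyC i₀ hi₀
  have habs : |x i₀ - y i₀| = r := by
    rw [hpin]
    rw [show x i₀ - (x i₀ + (σ i₀ : ℝ) * r) = -((σ i₀ : ℝ) * r) by ring, abs_neg,
      abs_mul, sign_abs_eq_one hi₀, one_mul, abs_of_nonneg Metric.infDist_nonneg]
  have hlt : |x i₀ - y i₀| ≤ r - t := by
    calc |x i₀ - y i₀| ≤ |x i₀ - z i₀| + |z i₀ - y i₀| := abs_sub_le _ _ _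
      _ ≤ t * |v i₀| + r' := add_le_add (hxz i₀) (hcoord i₀)
      _ ≤ 0 + (r - t) := by
          rw [hv0]
          simp only [abs_zero, mul_zero]
          exact add_le_add le_rfl hle
      _ = r - t := by ring
  rw [habs] at hlt
  linarith


lemma forward (L : Submodule ℝ (Fin m → ℝ)) (σ : Fin m → SignType) (hσ : σ ≠ 0)
    (h : (interior {x : Fin m → ℝ | typeL L x = σ}).Nonempty) :
    ∀ τ : Fin m → SignType, inOM L τ → τ ≠ 0 →
      {i | τ i ≠ 0} ⊆ {i | σ i ≠ 0} → {i | τ i ≠ 0} = {i | σ i ≠ 0} := by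
  obtain ⟨x₀, hx₀⟩ := h
  rintro τ ⟨c, hcL, hcs⟩ hτ0 hsub
  rw [mem_interior_iff_mem_nhds, Metric.mem_nhds_iff] at hx₀
  obtain ⟨ε, hε, hball⟩ := hx₀
  have hsupp : ∀ i, σ i = 0 → c i = 0 := by
    intro i hi
    have hti : τ i = 0 := by
      by_contra h'
      exact (hsub (show i ∈ {i | τ i ≠ 0} from h')) hi
    rw [← hcs i] at hti
    exact sign_eq_zero_iff.1 hti
  set K := ∑ i, c i * (σ i : ℝ) with hKdef
  have hfib : ∀ z ∈ Metric.ball x₀ ε, typeL L z = σ := fun z hz => hball hz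
  have hzero : ∀ z ∈ Metric.ball x₀ ε,
      ∑ i, c i * z i + K * Metric.infDist z (L : Set (Fin m → ℝ)) = 0 :=
    fun z hz => fiber_lin_eq L hσ c hcL hsupp (hfib z hz)
  have hx₀fib : typeL L x₀ = σ := hfib x₀ (Metric.mem_ball_self hε)
  have hx₀0 := hzero x₀ (Metric.mem_ball_self hε)
  set t := ε / 2 with htdef
  have ht : 0 < t := by positivity
  have hmemball : ∀ w : Fin m → ℝ, (∀ j, |w j| ≤ 1) → x₀ + t • w ∈ Metric.ball x₀ ε := by
    intro w hw
    rw [Metric.mem_ball, dist_eq_norm]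
    have h1 : x₀ + t • w - x₀ = t • w := by abel
    rw [h1, norm_smul, Real.norm_eq_abs, abs_of_pos ht]
    have h2 : ‖w‖ ≤ 1 := by
      rw [pi_norm_le_iff_of_nonneg zero_le_one]
      intro j
      rw [Real.norm_eq_abs]
      exact hw j
    calc t * ‖w‖ ≤ t * 1 := mul_le_mul_of_nonneg_left h2 ht.le
      _ < ε := by rw [mul_one, htdef]; linarith
  have hexpand : ∀ w : Fin m → ℝ,
      ∑ i, c i * (x₀ + t • w) i = ∑ i, c i * x₀ i + t * ∑ i, c i * w i := by
    intro w
    simp only [Pi.add_apply, Pi.smul_apply, smul_eq_mul]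
    rw [Finset.mul_sum, ← Finset.sum_add_distrib]
    apply Finset.sum_congr rfl
    intro i _
    ring
  -- Step A : K = 0
  apply Set.Subset.antisymm hsub
  intro i₀ hσi₀'
  have hσi₀ : σ i₀ ≠ 0 := hσi₀'
  by_contra hτi₀'
  have hτi₀ : τ i₀ = 0 := by simpa using hτi₀'
  have hci₀ : c i₀ = 0 := by
    rw [← hcs i₀] at hτi₀
    exact sign_eq_zero_iff.1 hτi₀
  exfalso
  set v : Fin m → ℝ := fun j => if j = i₀ then 0 else ((σ j : ℝ)) with hvdef
  have hv1 : ∀ j, |v j| ≤ 1 := by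
    intro j
    rw [hvdef]
    dsimp only
    split_ifs
    · norm_num
    · exact sign_abs_le _
  have hv0 : v i₀ = 0 := by rw [hvdef]; simp
  have hzball := hmemball v hv1
  have h1 := step1 L hσ hx₀fib hσi₀ ht hv0 hv1
  have hz0 := hzero _ hzball
  have hcv : ∑ i, c i * v i = K := by
    rw [hKdef]
    apply Finset.sum_congr rfl
    intro i _
    rw [hvdef]
    dsimp only
    split_ifs with hii
    · subst hii
      rw [hci₀]
      ring
    · rfl
  rw [hexpand v, hcv] at hz0
  set r := Metric.infDist x₀ (L : Set (Fin m → ℝ)) with hrdef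
  set r' := Metric.infDist (x₀ + t • v) (L : Set (Fin m → ℝ)) with hr'def
  have hKzero : K = 0 := by
    have hfac : K * (t + r' - r) = 0 := by linear_combination hz0 - hx₀0
    rcases mul_eq_zero.1 hfac with h | h
    · exact h
    · exfalso
      have : r - t < r' := h1
      linarith
  -- Step B : conclude c = 0, contradiction
  set w : Fin m → ℝ := fun j => ((SignType.sign (c j) : ℝ)) with hwdef
  have hw1 : ∀ j, |w j| ≤ 1 := fun j => sign_abs_le _
  have hz2 := hzero _ (hmemball w hw1)
  rw [hexpand w] at hz2
  have hcw : ∑ i, c i * w i = ∑ i, |c i| := by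
    apply Finset.sum_congr rfl
    intro i _
    rw [hwdef]
    dsimp only
    exact self_mul_sign (c i)
  rw [hcw] at hz2
  have hsum0 : ∑ i, |c i| = 0 := by
    rw [hKzero] at hz2 hx₀0
    have hx0' : ∑ i, c i * x₀ i = 0 := by linarith
    rw [hx0'] at hz2
    have : t * ∑ i, |c i| = 0 := by linarith
    rcases mul_eq_zero.1 this with h | h
    · exact absurd h (ne_of_gt ht)
    · exact h
  have hc0 : ∀ i, c i = 0 := by
    intro i
    have := (Finset.sum_eq_zero_iff_of_nonneg (fun i _ => abs_nonneg (c i))).1 hsum0 i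
      (Finset.mem_univ i)
    exact abs_eq_zero.1 this
  apply hτ0
  funext i
  rw [← hcs i, hc0 i]
  simp


lemma multiple_of_c (L : Submodule ℝ (Fin m → ℝ)) {σ : Fin m → SignType} (hσ : σ ≠ 0)
    (c : Fin m → ℝ) (hcL : ∀ y ∈ L, ∑ i, c i * y i = 0)
    (hcs : ∀ i, SignType.sign (c i) = σ i)
    (hcirc : ∀ τ : Fin m → SignType, inOM L τ → τ ≠ 0 →
        {i | τ i ≠ 0} ⊆ {i | σ i ≠ 0} → {i | τ i ≠ 0} = {i | σ i ≠ 0})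
    (w : Fin m → ℝ) (hwL : ∀ y ∈ L, ∑ i, w i * y i = 0)
    (hwS : ∀ i, σ i = 0 → w i = 0) : ∃ a : ℝ, w = a • c := by
  obtain ⟨i₀, hi₀⟩ : ∃ i, σ i ≠ 0 := by
    by_contra hno
    push_neg at hno
    exact hσ (funext hno)
  have hci₀ : c i₀ ≠ 0 := by
    intro h
    apply hi₀
    rw [← hcs i₀, h, sign_zero]
  set d : Fin m → ℝ := fun i => c i₀ * w i - w i₀ * c i with hd
  have hdL : ∀ y ∈ L, ∑ i, d i * y i = 0 := by
    intro y hy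
    have h1 : ∑ i, d i * y i
        = c i₀ * ∑ i, w i * y i - w i₀ * ∑ i, c i * y i := by
      rw [Finset.mul_sum, Finset.mul_sum, ← Finset.sum_sub_distrib]
      apply Finset.sum_congr rfl
      intro i _
      rw [hd]; ring
    rw [h1, hcL y hy, hwL y hy]; ring
  have hdS : ∀ i, σ i = 0 → d i = 0 := by
    intro i hi
    rw [hd]
    have hci : c i = 0 := by
      have := hcs i
      rw [hi] at this
      exact sign_eq_zero_iff.1 this
    simp [hwS i hi, hci]
  have hd0 : d = 0 := by
    by_contra hdne
    obtain ⟨j, hj⟩ := Function.ne_iff.1 hdne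
    set τ : Fin m → SignType := fun i => SignType.sign (d i) with hτ
    have hOM : inOM L τ := ⟨d, hdL, fun i => rfl⟩
    have hτ0 : τ ≠ 0 := by
      intro h
      apply hj
      have := congrFun h j
      rw [hτ] at this
      simpa [sign_eq_zero_iff] using this
    have hτsub : {i | τ i ≠ 0} ⊆ {i | σ i ≠ 0} := by
      intro i hi
      simp only [Set.mem_setOf_eq] at hi ⊢
      intro hσi
      apply hi
      rw [hτ]
      simp [sign_eq_zero_iff, hdS i hσi]
    have heq := hcirc τ hOM hτ0 hτsub
    have : i₀ ∈ {i | τ i ≠ 0} := heq ▸ hi₀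
    apply this
    rw [hτ]
    simp only
    have : d i₀ = 0 := by rw [hd]; ring
    rw [this, sign_zero]
  refine ⟨w i₀ / c i₀, funext fun i => ?_⟩
  have hdi : c i₀ * w i - w i₀ * c i = 0 := by
    have := congrFun hd0 i
    rw [hd] at this
    simpa using this
  have heq : c i₀ * w i = w i₀ * c i := by linarith
  show w i = (w i₀ / c i₀) * c i
  field_simp
  linarith

lemma ker_le_sup (L : Submodule ℝ (Fin m → ℝ)) {σ : Fin m → SignType} (hσ : σ ≠ 0)
    (c : Fin m → ℝ) (hcL : ∀ y ∈ L, ∑ i, c i * y i = 0)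
    (hcs : ∀ i, SignType.sign (c i) = σ i)
    (hcirc : ∀ τ : Fin m → SignType, inOM L τ → τ ≠ 0 →
        {i | τ i ≠ 0} ⊆ {i | σ i ≠ 0} → {i | τ i ≠ 0} = {i | σ i ≠ 0}) :
    LinearMap.ker (dotL c) ≤ L ⊔ zeroOn σ := by
  intro u hu
  have hrw := Subspace.dualAnnihilator_dualCoannihilator_eq (W := L ⊔ zeroOn σ)
  rw [← hrw, Submodule.mem_dualCoannihilator]
  intro ψ hψ
  rw [Submodule.mem_dualAnnihilator] at hψ
  set w : Fin m → ℝ := fun i => ψ (Pi.single i 1) with hw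
  have hψz : ∀ z : Fin m → ℝ, ψ z = ∑ i, w i * z i := by
    intro z
    conv_lhs => rw [← Finset.univ_sum_single z, map_sum]
    apply Finset.sum_congr rfl
    intro i _
    have h1 : Pi.single i (z i) = z i • (Pi.single i 1 : Fin m → ℝ) := by
      funext j
      by_cases hji : j = i
      · subst hji
        simp
      · simp [Pi.single_eq_of_ne hji]
    rw [h1, map_smul, smul_eq_mul, hw, mul_comm]
  have hwL : ∀ y ∈ L, ∑ i, w i * y i = 0 := fun y hy => by
    rw [← hψz]
    exact hψ y (Submodule.mem_sup_left hy)
  have hwS : ∀ i, σ i = 0 → w i = 0 := by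
    intro i hi
    have hmem : Pi.single i (1 : ℝ) ∈ zeroOn σ := by
      intro j hj
      have hij : j ≠ i := fun h => hj (h ▸ hi)
      exact Pi.single_eq_of_ne hij 1
    exact hψ _ (Submodule.mem_sup_right hmem)
  obtain ⟨a, ha⟩ := multiple_of_c L hσ c hcL hcs hcirc w hwL hwS
  rw [hψz u, ha]
  have hu0 : ∑ i, c i * u i = 0 := hu
  calc ∑ i, (a • c) i * u i = a * ∑ i, c i * u i := by
        rw [Finset.mul_sum]
        apply Finset.sum_congr rfl
        intro i _
        simp [smul_eq_mul]; ring
    _ = 0 := by rw [hu0, mul_zero]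


lemma exists_bounded_section (L : Submodule ℝ (Fin m → ℝ)) (σ : Fin m → SignType)
    (c : Fin m → ℝ) (hcS : ∀ i, σ i = 0 → c i = 0)
    (hcL : ∀ y ∈ L, ∑ i, c i * y i = 0)
    (hker : LinearMap.ker (dotL c) ≤ L ⊔ zeroOn σ) :
    ∃ C : ℝ, 0 ≤ C ∧ ∀ u : Fin m → ℝ, (∑ i, c i * u i = 0) →
      ∃ y, y ∈ L ∧ (∀ i, σ i ≠ 0 → y i = u i) ∧ ‖y‖ ≤ C * ‖u‖ := by
  set N := LinearMap.ker (dotL c) with hN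
  have hLN : ∀ y : ↥L, (y : Fin m → ℝ) ∈ N := by
    intro y
    exact LinearMap.mem_ker.2 (hcL y y.2)
  have hKN : ∀ k : ↥(zeroOn σ), (k : Fin m → ℝ) ∈ N := by
    intro k
    apply LinearMap.mem_ker.2
    show ∑ i, c i * (k : Fin m → ℝ) i = 0
    apply Finset.sum_eq_zero
    intro i _
    by_cases hi : σ i = 0
    · rw [hcS i hi, zero_mul]
    · rw [k.2 i hi, mul_zero]
  set F : (↥L × ↥(zeroOn σ)) →ₗ[ℝ] ↥N :=
    LinearMap.codRestrict N
      ((L.subtype.comp (LinearMap.fst ℝ ↥L ↥(zeroOn σ)))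
        + ((zeroOn σ).subtype.comp (LinearMap.snd ℝ ↥L ↥(zeroOn σ))))
      (fun p => by
        simp only [LinearMap.add_apply, LinearMap.comp_apply, LinearMap.fst_apply,
          LinearMap.snd_apply, Submodule.coe_subtype]
        exact N.add_mem (hLN p.1) (hKN p.2)) with hF
  have hFsurj : LinearMap.range F = ⊤ := by
    rw [LinearMap.range_eq_top]
    rintro ⟨u, hu⟩
    obtain ⟨y, hyL, k, hkK, hyk⟩ := Submodule.mem_sup.1 (hker hu)
    refine ⟨(⟨y, hyL⟩, ⟨k, hkK⟩), ?_⟩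
    apply Subtype.ext
    exact hyk
  obtain ⟨g, hg⟩ := F.exists_rightInverse_of_surjective hFsurj
  set G : ↥N →ₗ[ℝ] (Fin m → ℝ) :=
    L.subtype.comp ((LinearMap.fst ℝ ↥L ↥(zeroOn σ)).comp g) with hG
  set Gc := LinearMap.toContinuousLinearMap G with hGc
  refine ⟨‖Gc‖, Gc.opNorm_nonneg, ?_⟩
  intro u hu
  have huN : u ∈ N := LinearMap.mem_ker.2 hu
  set p := g ⟨u, huN⟩ with hp
  have hFp : F p = ⟨u, huN⟩ := by
    rw [hp, ← LinearMap.comp_apply, hg, LinearMap.id_apply]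
  have hsum : (p.1 : Fin m → ℝ) + (p.2 : Fin m → ℝ) = u := by
    have := congrArg (Subtype.val) hFp
    exact this
  refine ⟨(p.1 : Fin m → ℝ), p.1.2, ?_, ?_⟩
  · intro i hi
    have h2 : (p.2 : Fin m → ℝ) i = 0 := p.2.2 i hi
    have := congrFun hsum i
    simp only [Pi.add_apply] at this
    rw [h2, add_zero] at this
    exact this
  · have h1 : (p.1 : Fin m → ℝ) = G ⟨u, huN⟩ := by
      rw [hG]
      simp [hp]
    rw [h1]
    have h2 : G ⟨u, huN⟩ = Gc ⟨u, huN⟩ := by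
      rw [hGc, LinearMap.coe_toContinuousLinearMap']
    rw [h2]
    calc ‖Gc ⟨u, huN⟩‖ ≤ ‖Gc‖ * ‖(⟨u, huN⟩ : ↥N)‖ := Gc.le_opNorm _
      _ = ‖Gc‖ * ‖u‖ := rfl


lemma pinned_of_certificate (L : Submodule ℝ (Fin m → ℝ)) (c x : Fin m → ℝ)
    (hcL : ∀ y ∈ L, ∑ i, c i * y i = 0) (hA : ∑ i, |c i| = 1)
    (hr : ∑ i, c i * x i = - Metric.infDist x (L : Set (Fin m → ℝ))) :
    ∀ y ∈ closestPts x (L : Set (Fin m → ℝ)), ∀ i, c i ≠ 0 →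
      y i = x i + (SignType.sign (c i) : ℝ)
        * Metric.infDist x (L : Set (Fin m → ℝ)) := by
  intro y hy i hci
  set r := Metric.infDist x (L : Set (Fin m → ℝ)) with hrdef
  have hr0 : 0 ≤ r := Metric.infDist_nonneg
  have hdxy : dist x y = r := hy.2
  have hcoord : ∀ j, |x j - y j| ≤ r := fun j => hdxy ▸ abs_le_dist x y j
  have hg0 : ∀ j ∈ Finset.univ, (0:ℝ) ≤ |c j| * r + c j * (x j - y j) := by
    intro j _
    have h1 : -(|c j| * r) ≤ c j * (x j - y j) := by
      have h2 : |c j * (x j - y j)| ≤ |c j| * r := by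
        rw [abs_mul]
        exact mul_le_mul_of_nonneg_left (hcoord j) (abs_nonneg _)
      linarith [neg_abs_le (c j * (x j - y j))]
    linarith
  have hsumg : ∑ j, (|c j| * r + c j * (x j - y j)) = 0 := by
    rw [Finset.sum_add_distrib, ← Finset.sum_mul, hA, one_mul]
    have h1 : ∑ j, c j * (x j - y j) = ∑ j, c j * x j - ∑ j, c j * y j := by
      rw [← Finset.sum_sub_distrib]
      apply Finset.sum_congr rfl
      intro j _
      ring
    rw [h1, hcL y hy.1, hr]
    ring
  have hterm := (Finset.sum_eq_zero_iff_of_nonneg hg0).1 hsumg i (Finset.mem_univ i)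
  have heq : c i * (x i - y i) = -(|c i| * r) := by linarith
  rcases lt_trichotomy (c i) 0 with h | h | h
  · rw [sign_neg h, SignType.coe_neg_one, abs_of_neg h] at *
    have : x i - y i = r := by
      apply mul_left_cancel₀ (ne_of_lt h)
      linarith
    linarith
  · exact absurd h hci
  · rw [sign_pos h, SignType.coe_one, abs_of_pos h] at *
    have : x i - y i = -r := by
      have := mul_left_cancel₀ (ne_of_gt h) (heq.trans (by ring : -(c i * r) = c i * (-r)))
      exact this
    linarith


lemma backward (L : Submodule ℝ (Fin m → ℝ)) (σ : Fin m → SignType) (hσ : σ ≠ 0)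
    (hmem : inOM L σ)
    (hcirc : ∀ τ : Fin m → SignType, inOM L τ → τ ≠ 0 →
        {i | τ i ≠ 0} ⊆ {i | σ i ≠ 0} → {i | τ i ≠ 0} = {i | σ i ≠ 0}) :
    (interior {x : Fin m → ℝ | typeL L x = σ}).Nonempty := by
  classical
  obtain ⟨c₀, hc₀L, hc₀s⟩ := hmem
  obtain ⟨i₁, hi₁⟩ : ∃ i, σ i ≠ 0 := by
    by_contra hno
    push_neg at hno
    exact hσ (funext hno)
  have hc₀i₁ : c₀ i₁ ≠ 0 := by
    intro h
    apply hi₁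
    rw [← hc₀s i₁, h, sign_zero]
  set A := ∑ i, |c₀ i| with hAdef
  have hApos : 0 < A := by
    apply Finset.sum_pos' (fun i _ => abs_nonneg _)
    exact ⟨i₁, Finset.mem_univ i₁, abs_pos.2 hc₀i₁⟩
  set c : Fin m → ℝ := fun i => A⁻¹ * c₀ i with hcdef
  have hcL : ∀ y ∈ L, ∑ i, c i * y i = 0 := by
    intro y hy
    have h1 : ∑ i, c i * y i = A⁻¹ * ∑ i, c₀ i * y i := by
      rw [Finset.mul_sum]
      apply Finset.sum_congr rfl
      intro i _
      rw [hcdef]; ring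
    rw [h1, hc₀L y hy, mul_zero]
  have hcs : ∀ i, SignType.sign (c i) = σ i := by
    intro i
    rw [hcdef]
    show SignType.sign (A⁻¹ * c₀ i) = σ i
    rw [sign_mul, sign_pos (inv_pos.2 hApos), one_mul, hc₀s i]
  have hA1 : ∑ i, |c i| = 1 := by
    have h1 : ∑ i, |c i| = A⁻¹ * ∑ i, |c₀ i| := by
      rw [Finset.mul_sum]
      apply Finset.sum_congr rfl
      intro i _
      rw [hcdef, abs_mul, abs_of_pos (inv_pos.2 hApos)]
    rw [h1, ← hAdef, inv_mul_cancel₀ (ne_of_gt hApos)]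
  have hcS : ∀ i, σ i = 0 → c i = 0 := by
    intro i hi
    have := hcs i
    rw [hi] at this
    exact sign_eq_zero_iff.1 this
  have hcabs : ∀ i, c i * (σ i : ℝ) = |c i| := by
    intro i
    rw [← hcs i]
    exact self_mul_sign (c i)
  have hker := ker_le_sup L hσ c hcL hcs hcirc
  obtain ⟨C, hC0, hsec⟩ := exists_bounded_section L σ c hcS hcL hker
  set ε : ℝ := (2 + 2 * C)⁻¹ with hεdef
  have hden : (0:ℝ) < 2 + 2 * C := by linarith
  have hε : 0 < ε := inv_pos.2 hden
  have hεkey : (1 + 2 * C) * ε = 1 - ε := by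
    rw [hεdef]
    field_simp
    ring
  set x₀ : Fin m → ℝ := fun i => -((σ i : ℝ)) with hx₀def
  refine ⟨x₀, mem_interior_iff_mem_nhds.2 (Metric.mem_nhds_iff.2 ⟨ε, hε, ?_⟩)⟩
  intro x hx
  rw [Metric.mem_ball] at hx
  set D := dist x x₀ with hDdef
  have hD0 : 0 ≤ D := dist_nonneg
  have hδ : ∀ i, |x i - x₀ i| ≤ D := fun i => abs_le_dist x x₀ i
  set ip := ∑ i, c i * (x i - x₀ i) with hipdef
  have hip : |ip| ≤ D := by
    calc |ip| ≤ ∑ i, |c i * (x i - x₀ i)| := Finset.abs_sum_le_sum_abs _ _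
      _ ≤ ∑ i, |c i| * D := by
          apply Finset.sum_le_sum
          intro i _
          rw [abs_mul]
          exact mul_le_mul_of_nonneg_left (hδ i) (abs_nonneg _)
      _ = D := by rw [← Finset.sum_mul, hA1, one_mul]
  have hcx₀ : ∑ i, c i * x₀ i = -1 := by
    have h1 : ∑ i, c i * x₀ i = -∑ i, |c i| := by
      rw [← Finset.sum_neg_distrib]
      apply Finset.sum_congr rfl
      intro i _
      rw [hx₀def, ← hcabs i]
      ring
    rw [h1, hA1]
  set rs : ℝ := 1 - ip with hrsdef
  have hrspos : 1 - ε < rs := by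
    have : ip < ε := lt_of_le_of_lt (le_trans (le_abs_self ip) hip) hx
    rw [hrsdef]; linarith
  have hrs0 : 0 < rs := by
    have : ε < 1 := by
      rw [hεdef]
      rw [inv_lt_one_iff₀]
      right; linarith
    linarith
  have hsumx : ∑ i, c i * x i = -rs := by
    have h1 : ∑ i, c i * x i = ∑ i, c i * x₀ i + ∑ i, c i * (x i - x₀ i) := by
      rw [← Finset.sum_add_distrib]
      apply Finset.sum_congr rfl
      intro i _
      ring
    rw [h1, hcx₀, ← hipdef, hrsdef]
    ring
  set u : Fin m → ℝ := fun i => (x i - x₀ i) - ip * (σ i : ℝ) with hudef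
  have hcu : ∑ i, c i * u i = 0 := by
    have h1 : ∑ i, c i * u i = ∑ i, c i * (x i - x₀ i) - ip * ∑ i, c i * (σ i : ℝ) := by
      rw [Finset.mul_sum, ← Finset.sum_sub_distrib]
      apply Finset.sum_congr rfl
      intro i _
      rw [hudef]; ring
    have h2 : ∑ i, c i * (σ i : ℝ) = 1 := by
      rw [show ∑ i, c i * (σ i : ℝ) = ∑ i, |c i| from Finset.sum_congr rfl fun i _ => hcabs i,
        hA1]
    rw [h1, h2, ← hipdef]
    ring
  have hunorm : ‖u‖ ≤ D + |ip| := by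
    rw [pi_norm_le_iff_of_nonneg (by positivity)]
    intro i
    rw [Real.norm_eq_abs, hudef]
    calc |(x i - x₀ i) - ip * (σ i : ℝ)| ≤ |x i - x₀ i| + |ip * (σ i : ℝ)| :=
          abs_sub _ _
      _ ≤ D + |ip| := by
          apply add_le_add (hδ i)
          rw [abs_mul]
          calc |ip| * |(σ i : ℝ)| ≤ |ip| * 1 :=
                mul_le_mul_of_nonneg_left (sign_abs_le (σ i)) (abs_nonneg _)
            _ = |ip| := mul_one _
  obtain ⟨y, hyL, hyS, hynorm⟩ := hsec u hcu
  have hynorm2 : ‖y‖ ≤ 2 * C * D := by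
    calc ‖y‖ ≤ C * ‖u‖ := hynorm
      _ ≤ C * (D + |ip|) := mul_le_mul_of_nonneg_left hunorm hC0
      _ ≤ C * (D + D) := mul_le_mul_of_nonneg_left (by linarith) hC0
      _ = 2 * C * D := by ring
  -- coordinates of x - y
  have hyabs : ∀ i, |y i| ≤ 2 * C * D := by
    intro i
    calc |y i| ≤ ‖y‖ := by
          rw [← Real.norm_eq_abs]
          exact norm_le_pi_norm y i
      _ ≤ 2 * C * D := hynorm2
  have hpinS : ∀ i, σ i ≠ 0 → y i = x i + (σ i : ℝ) * rs := by
    intro i hi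
    rw [hyS i hi, hudef, hx₀def]
    simp only
    rw [hrsdef]
    ring
  have hoffS : ∀ i, σ i = 0 → |x i - y i| < rs := by
    intro i hi
    have hx₀i : x₀ i = 0 := by rw [hx₀def]; simp [hi]
    calc |x i - y i| ≤ |x i - x₀ i| + |y i| := by
          have h1 : x i - y i = (x i - x₀ i) + (x₀ i - y i) := by ring
          rw [h1]
          refine le_trans (abs_add_le _ _) ?_
          rw [hx₀i]
          simp
      _ ≤ D + 2 * C * D := add_le_add (hδ i) (hyabs i)
      _ = (1 + 2 * C) * D := by ring
      _ < (1 + 2 * C) * ε := by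
          apply mul_lt_mul_of_pos_left (hx) (by linarith)
      _ = 1 - ε := hεkey
      _ < rs := hrspos
  have hcoordall : ∀ i, |x i - y i| ≤ rs := by
    intro i
    by_cases hi : σ i = 0
    · exact (hoffS i hi).le
    · rw [hpinS i hi]
      rw [show x i - (x i + (σ i : ℝ) * rs) = -((σ i : ℝ) * rs) by ring, abs_neg, abs_mul,
        sign_abs_eq_one hi, one_mul, abs_of_pos hrs0]
  have hdxy : dist x y ≤ rs := dist_le_of_forall hrs0.le hcoordall
  have hlow : rs ≤ Metric.infDist x (L : Set (Fin m → ℝ)) := by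
    have h1 := abs_sum_le L c x hcL
    rw [hsumx, hA1, one_mul, abs_neg, abs_of_pos hrs0] at h1
    exact h1
  have hinf : Metric.infDist x (L : Set (Fin m → ℝ)) = rs :=
    le_antisymm (le_trans (Metric.infDist_le_dist_of_mem hyL) hdxy) hlow
  have hdisteq : dist x y = rs :=
    le_antisymm hdxy (hinf ▸ Metric.infDist_le_dist_of_mem hyL)
  have hyC : y ∈ closestPts x (L : Set (Fin m → ℝ)) := ⟨hyL, hdisteq.trans hinf.symm⟩
  have hxL : x ∉ L := by
    intro hmemL
    have h0 := Metric.infDist_zero_of_mem (show x ∈ (L : Set (Fin m → ℝ)) from hmemL)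
    rw [hinf] at h0
    linarith
  have hpinned : ∀ y' ∈ closestPts x (L : Set (Fin m → ℝ)), ∀ i, σ i ≠ 0 →
      y' i = x i + (σ i : ℝ) * rs := by
    intro y' hy' i hi
    have hci : c i ≠ 0 := by
      intro h
      apply hi
      rw [← hcs i, h, sign_zero]
    have := pinned_of_certificate L c x hcL hA1 (by rw [hsumx, hinf]) y' hy' i hci
    rw [hcs i, hinf] at this
    exact this
  show x ∈ {x | typeL L x = σ}
  simp only [Set.mem_setOf_eq]
  funext i
  simp only [typeL]
  rw [if_neg hxL]
  cases hsi : σ i with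
  | pos =>
    rw [if_pos]
    · rfl
    · intro y' hy'
      have := hpinned y' hy' i (by rw [hsi]; decide)
      rw [hsi] at this
      rw [this, hinf]
      norm_num
  | neg =>
    rw [if_neg, if_pos]
    · rfl
    · intro y' hy'
      have := hpinned y' hy' i (by rw [hsi]; decide)
      rw [hsi] at this
      rw [this, hinf]
      norm_num
      ring
    · intro hall
      have h1 := hall y hyC
      have h2 := hpinned y hyC i (by rw [hsi]; decide)
      rw [hsi] at h2
      rw [hinf] at h1
      rw [h2] at h1
      norm_num at h1
      linarith
  | zero =>
    rw [if_neg, if_neg]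
    · rfl
    · intro hall
      have h1 := hall y hyC
      have h2 := hoffS i hsi
      rw [hinf] at h1
      rw [h1] at h2
      rw [show x i - (x i - rs) = rs by ring, abs_of_pos hrs0] at h2
      linarith
    · intro hall
      have h1 := hall y hyC
      have h2 := hoffS i hsi
      rw [hinf] at h1
      rw [h1] at h2
      rw [show x i - (x i + rs) = -rs by ring, abs_neg, abs_of_pos hrs0] at h2
      linarith

end MyAux


/-- for a proper subspace `L` and a nonzero sign vector `σ ∈ O_L`, the set of
points of type `σ` has nonempty interior if and only if `σ` is a signed circuit of `O_L`,
i.e. its support is minimal among supports of nonzero elements of `O_L`. -/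
theorem type_fiber_interior_iff_circuit (m : ℕ) (L : Submodule ℝ (Fin m → ℝ))
    (hL : L ≠ ⊤) (σ : Fin m → SignType) (hσ : σ ≠ 0) (hmem : inOM L σ) :
    (interior {x : Fin m → ℝ | typeL L x = σ}).Nonempty ↔
      ∀ τ : Fin m → SignType, inOM L τ → τ ≠ 0 →
        {i | τ i ≠ 0} ⊆ {i | σ i ≠ 0} → {i | τ i ≠ 0} = {i | σ i ≠ 0} := by
  constructor
  · exact MyAux.forward L σ hσ
  · exact fun hcirc => MyAux.backward L σ hσ hmem hcirc
end
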